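/- arXiv:1812.00146 — 9 statements merged into one kernel-verified Lean document; each statement's English description precedes it below -/
import Mathlib

section
/- Let H be a real Hilbert space, μ ∈ (0,∞), I an arbitrary index set, and (x_i, q_i) ∈ H × H for i ∈ I. Then there exists a maximal monotone relation A on H that is μ-strongly monotone and satisfies (x_i, q_i) ∈ A for all i ∈ I if and only if ⟨x_i − x_j, q_i − q_j⟩ ≥ μ‖x_i − x_j‖² for all i, j ∈ I. -/
open RealInnerProductSpace

/-- A relation `A ⊆ H × H` is monotone. -/
def MonotoneRel {H : Type*} [NormedAddCommGroup H] [InnerProductSpace ℝ H]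
    (A : Set (H × H)) : Prop :=
  ∀ p ∈ A, ∀ p' ∈ A, ⟪p.2 - p'.2, p.1 - p'.1⟫ ≥ 0

/-- A relation `A ⊆ H × H` is maximal monotone: monotone and not properly contained in
any monotone relation. -/
def MaximalMonotoneRel {H : Type*} [NormedAddCommGroup H] [InnerProductSpace ℝ H]
    (A : Set (H × H)) : Prop :=
  MonotoneRel A ∧ ∀ B : Set (H × H), MonotoneRel B → A ⊆ B → B = A

/-- A relation `A ⊆ H × H` is `μ`-strongly monotone. -/
def StronglyMonotoneRel {H : Type*} [NormedAddCommGroup H] [InnerProductSpace ℝ H]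
    (μ : ℝ) (A : Set (H × H)) : Prop :=
  ∀ p ∈ A, ∀ p' ∈ A, ⟪p.2 - p'.2, p.1 - p'.1⟫ ≥ μ * ‖p.1 - p'.1‖ ^ 2

section Auxiliary

variable {H : Type*} [NormedAddCommGroup H] [InnerProductSpace ℝ H]

lemma cayley_sq (u v a b : H) :
    ‖(u + v) - (a + b)‖ ^ 2 - ‖(u - v) - (a - b)‖ ^ 2 = 4 * ⟪v - b, u - a⟫ := by
  have h1 : (u + v) - (a + b) = (u - a) + (v - b) := by abel
  have h2 : (u - v) - (a - b) = (u - a) - (v - b) := by abel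
  have e1 := norm_add_sq_real (u - a) (v - b)
  have e2 := norm_sub_sq_real (u - a) (v - b)
  rw [h1, h2, e1, e2, real_inner_comm]
  ring

omit [InnerProductSpace ℝ H] in
lemma norm_le_norm_of_sq_le {a b : H} (h : ‖a‖ ^ 2 ≤ ‖b‖ ^ 2) : ‖a‖ ≤ ‖b‖ := by
  nlinarith [norm_nonneg a, norm_nonneg b]

lemma sum_sum_norm_sub_sq {β : Type*} (t : Finset β) (c : β → ℝ) (P : β → H)
    (hc1 : ∑ i ∈ t, c i = 1) :
    ∑ i ∈ t, ∑ j ∈ t, c i * c j * ‖P i - P j‖ ^ 2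
      = 2 * ∑ i ∈ t, c i * ‖P i‖ ^ 2 - 2 * ‖∑ i ∈ t, c i • P i‖ ^ 2 := by
  have hrow : ∀ i ∈ t, ∑ j ∈ t, c i * c j * ‖P i‖ ^ 2 = c i * ‖P i‖ ^ 2 := by
    intro i _
    have : ∑ j ∈ t, c i * c j * ‖P i‖ ^ 2 = c i * ‖P i‖ ^ 2 * ∑ j ∈ t, c j := by
      rw [Finset.mul_sum]; exact Finset.sum_congr rfl fun j _ => by ring
    rw [this, hc1, mul_one]
  have S1 : ∑ i ∈ t, ∑ j ∈ t, c i * c j * ‖P i‖ ^ 2 = ∑ i ∈ t, c i * ‖P i‖ ^ 2 :=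
    Finset.sum_congr rfl hrow
  have S2 : ∑ i ∈ t, ∑ j ∈ t, c i * c j * ‖P j‖ ^ 2 = ∑ i ∈ t, c i * ‖P i‖ ^ 2 := by
    rw [Finset.sum_comm]
    refine Finset.sum_congr rfl fun j hj => ?_
    have : ∑ i ∈ t, c i * c j * ‖P j‖ ^ 2 = c j * ‖P j‖ ^ 2 * ∑ i ∈ t, c i := by
      rw [Finset.mul_sum]; exact Finset.sum_congr rfl fun i _ => by ring
    rw [this, hc1, mul_one]
  have hinner : ∑ i ∈ t, ∑ j ∈ t, c i * c j * ⟪P i, P j⟫ = ‖∑ i ∈ t, c i • P i‖ ^ 2 := by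
    rw [← real_inner_self_eq_norm_sq, sum_inner]
    refine Finset.sum_congr rfl fun i _ => ?_
    rw [inner_sum]
    refine Finset.sum_congr rfl fun j _ => ?_
    rw [real_inner_smul_left, real_inner_smul_right]
    ring
  have expand : ∑ i ∈ t, ∑ j ∈ t, c i * c j * ‖P i - P j‖ ^ 2
      = ∑ i ∈ t, ∑ j ∈ t, (c i * c j * ‖P i‖ ^ 2 + c i * c j * ‖P j‖ ^ 2
          - 2 * (c i * c j * ⟪P i, P j⟫)) := by
    refine Finset.sum_congr rfl fun i _ => Finset.sum_congr rfl fun j _ => ?_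
    rw [norm_sub_sq_real]; ring
  rw [expand]
  simp only [Finset.sum_sub_distrib, Finset.sum_add_distrib, ← Finset.mul_sum]
  rw [S1, S2, hinner]
  ring

set_option maxHeartbeats 1600000 in
lemma kirszbraun_finite [CompleteSpace H] {κ : Type*} [Fintype κ] [Nonempty κ]
    (a y : κ → H) (hk : ∀ i j, ‖y i - y j‖ ≤ ‖a i - a j‖) (ζ : H) :
    ∃ w : H, ∀ i, ‖w - y i‖ ≤ ‖ζ - a i‖ := by
  classical
  have hne : (Finset.univ : Finset κ).Nonempty := Finset.univ_nonempty
  set φ : H → ℝ := fun w => Finset.univ.sup' hne (fun i => ‖w - y i‖ ^ 2 - ‖ζ - a i‖ ^ 2)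
    with hφdef
  have hφcont : Continuous φ := by
    apply Continuous.finset_sup'_apply hne
    intro i _
    have : Continuous fun w : H => ‖w - y i‖ ^ 2 - ‖ζ - a i‖ ^ 2 := by continuity
    exact this
  set K := convexHull ℝ (Set.range y) with hKdef
  have hKcomp : IsCompact K := (Set.finite_range y).isCompact_convexHull ℝ
  have hKne : K.Nonempty :=
    ⟨y (Classical.arbitrary κ), subset_convexHull ℝ _ (Set.mem_range_self _)⟩
  have hKconv : Convex ℝ K := convex_convexHull ℝ _
  obtain ⟨w₀, hw₀K, hminOn⟩ := hKcomp.exists_isMinOn hKne hφcont.continuousOn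
  have hmin : ∀ v ∈ K, φ w₀ ≤ φ v := fun v hv => hminOn hv
  set M := φ w₀ with hMdef
  have hterm_le : ∀ i, ‖w₀ - y i‖ ^ 2 - ‖ζ - a i‖ ^ 2 ≤ M := fun i =>
    Finset.le_sup' (fun i => ‖w₀ - y i‖ ^ 2 - ‖ζ - a i‖ ^ 2) (Finset.mem_univ i)
  by_cases hM : M ≤ 0
  · refine ⟨w₀, fun i => norm_le_norm_of_sq_le ?_⟩
    have := hterm_le i
    linarith
  push_neg at hM
  exfalso
  -- the active set
  set T : Set κ := {i | ‖w₀ - y i‖ ^ 2 - ‖ζ - a i‖ ^ 2 = M} with hTdef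
  set C := convexHull ℝ (y '' T) with hCdef
  have hCcomp : IsCompact C := ((Set.toFinite T).image y).isCompact_convexHull ℝ
  have hCconv : Convex ℝ C := convex_convexHull ℝ _
  have hCne : C.Nonempty := by
    obtain ⟨i, _, hi⟩ := Finset.exists_mem_eq_sup' hne
      (fun i => ‖w₀ - y i‖ ^ 2 - ‖ζ - a i‖ ^ 2)
    exact ⟨y i, subset_convexHull ℝ _ ⟨i, hi.symm, rfl⟩⟩
  -- Step 1 : w₀ lies in the convex hull of the active points
  have hw₀C : w₀ ∈ C := by
    by_contra hnot
    obtain ⟨P, hPC, hPmin⟩ :=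
      exists_norm_eq_iInf_of_complete_convex hCne (hCcomp.isClosed.isComplete) hCconv w₀
    have hvar : ∀ c ∈ C, ⟪w₀ - P, c - P⟫ ≤ 0 :=
      (norm_eq_iInf_iff_real_inner_le_zero hCconv hPC).mp hPmin
    set v := P - w₀ with hvdef
    have hvne : v ≠ 0 := sub_ne_zero.mpr (fun h => hnot (h ▸ hPC))
    have hvsq : 0 < ‖v‖ ^ 2 := pow_pos (norm_pos_iff.mpr hvne) 2
    have hact : ∀ i ∈ T, ⟪v, w₀ - y i⟫ ≤ -‖v‖ ^ 2 := by
      intro i hi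
      have h1 : ⟪w₀ - P, y i - P⟫ ≤ 0 := hvar _ (subset_convexHull ℝ _ ⟨i, hi, rfl⟩)
      have e : w₀ - y i = (w₀ - P) + (P - y i) := by abel
      have e2 : ⟪v, w₀ - P⟫ = -‖v‖ ^ 2 := by
        rw [hvdef, show w₀ - P = -(P - w₀) by abel, inner_neg_right,
          real_inner_self_eq_norm_sq]
      have e3 : ⟪v, P - y i⟫ = ⟪w₀ - P, y i - P⟫ := by
        rw [hvdef, show P - w₀ = -(w₀ - P) by abel, show P - y i = -(y i - P) by abel,
          inner_neg_neg]
      rw [e, inner_add_right, e2, e3]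
      linarith
    -- choose the step size t
    set D := Finset.univ.sup' hne (fun i => |⟪v, w₀ - y i⟫|) with hDdef
    have hD0 : 0 ≤ D := le_trans (abs_nonneg _)
      (Finset.le_sup' (fun i => |⟪v, w₀ - y i⟫|) (Finset.mem_univ (Classical.arbitrary κ)))
    have hDle : ∀ i, ⟪v, w₀ - y i⟫ ≤ D := fun i =>
      le_trans (le_abs_self _) (Finset.le_sup' (fun i => |⟪v, w₀ - y i⟫|) (Finset.mem_univ i))
    set g : κ → ℝ := fun i => if i ∈ T then 1 else M - (‖w₀ - y i‖ ^ 2 - ‖ζ - a i‖ ^ 2)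
      with hgdef
    set ε := Finset.univ.inf' hne g with hεdef
    have hε : 0 < ε := by
      rw [hεdef, Finset.lt_inf'_iff]
      intro i _
      by_cases hi : i ∈ T
      · simp [hgdef, hi]
      · have h1 := hterm_le i
        have h2 : ‖w₀ - y i‖ ^ 2 - ‖ζ - a i‖ ^ 2 ≠ M := hi
        simp only [hgdef, hi, if_false]
        cases lt_or_eq_of_le h1 with
        | inl h => linarith
        | inr h => exact absurd h h2
    have hεle : ∀ i, i ∉ T → ε ≤ M - (‖w₀ - y i‖ ^ 2 - ‖ζ - a i‖ ^ 2) := by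
      intro i hi
      have h2 : ε ≤ g i := Finset.inf'_le _ (Finset.mem_univ i)
      simp only [hgdef, if_neg hi] at h2
      exact h2
    set den := 2 * D + ‖v‖ ^ 2 + 1 with hdendef
    have hden : 0 < den := by positivity
    set t := min 1 (ε / den) with htdef
    have htpos : 0 < t := lt_min one_pos (div_pos hε hden)
    have ht1 : t ≤ 1 := min_le_left _ _
    have htden : t * den ≤ ε := by
      have := min_le_right 1 (ε / den)
      calc t * den ≤ (ε / den) * den := by nlinarith
        _ = ε := div_mul_cancel₀ _ (ne_of_gt hden)
    have key : ∀ i, ‖(w₀ + t • v) - y i‖ ^ 2 - ‖ζ - a i‖ ^ 2 < M := by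
      intro i
      have expand : ‖(w₀ + t • v) - y i‖ ^ 2
          = ‖w₀ - y i‖ ^ 2 + 2 * (t * ⟪v, w₀ - y i⟫) + t ^ 2 * ‖v‖ ^ 2 := by
        have e : (w₀ + t • v) - y i = (w₀ - y i) + t • v := by
          rw [add_sub_right_comm]
        rw [e, norm_add_sq_real, real_inner_smul_right, norm_smul, Real.norm_eq_abs,
          mul_pow, sq_abs, real_inner_comm (w₀ - y i) v]
      by_cases hi : i ∈ T
      · have h2 := hact i hi
        have hieq : ‖w₀ - y i‖ ^ 2 - ‖ζ - a i‖ ^ 2 = M := hi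
        rw [expand]
        nlinarith [mul_le_mul_of_nonneg_left h2 htpos.le, mul_pos htpos hvsq,
          mul_nonneg (mul_nonneg htpos.le (sub_nonneg.mpr ht1)) hvsq.le]
      · have hval : ‖w₀ - y i‖ ^ 2 - ‖ζ - a i‖ ^ 2 < M :=
          lt_of_le_of_ne (hterm_le i) hi
        have hεi := hεle i hi
        have hDi := hDle i
        have htden' : t * (2 * D + ‖v‖ ^ 2 + 1) ≤ ε := by rw [← hdendef]; exact htden
        rw [expand]
        nlinarith [mul_le_mul_of_nonneg_left hDi htpos.le,
          mul_nonneg (mul_nonneg htpos.le (sub_nonneg.mpr ht1)) hvsq.le]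
    have hinK : w₀ + t • v ∈ K := by
      have e : w₀ + t • v = (1 - t) • w₀ + t • P := by
        rw [hvdef, smul_sub, sub_smul, one_smul]; abel
      have hCK : C ⊆ K := by
        rw [hCdef, hKdef]
        refine convexHull_min ?_ hKconv
        rintro p ⟨i, -, rfl⟩
        exact subset_convexHull ℝ (Set.range y) (Set.mem_range_self i)
      rw [e]
      exact hKconv hw₀K (hCK hPC) (by linarith) htpos.le (by ring)
    have : φ (w₀ + t • v) < M := by
      rw [hφdef]
      exact (Finset.sup'_lt_iff hne).mpr fun i _ => key i
    exact absurd (hmin _ hinK) (not_le.mpr this)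
  -- Step 2 : representation as a convex combination and the contradiction
  rw [hCdef, convexHull_eq] at hw₀C
  obtain ⟨ι₂, s, c, z, hc0, hc1, hz, hcm⟩ := hw₀C
  rw [Finset.centerMass_eq_of_sum_1 _ _ hc1] at hcm
  have hz' : ∀ i : ι₂, ∃ k : κ, i ∈ s → (k ∈ T ∧ y k = z i) := by
    intro i
    by_cases hi : i ∈ s
    · obtain ⟨k, hk, hky⟩ := hz i hi
      exact ⟨k, fun _ => ⟨hk, hky⟩⟩
    · exact ⟨Classical.arbitrary κ, fun h => absurd h hi⟩
  choose idx hidx using hz'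
  -- the two double-sum identities
  have id1 := sum_sum_norm_sub_sq s c (fun i => z i - w₀) hc1
  have id2 := sum_sum_norm_sub_sq s c (fun i => a (idx i) - ζ) hc1
  have hzero : ∑ i ∈ s, c i • (z i - w₀) = 0 := by
    simp only [smul_sub, Finset.sum_sub_distrib, hcm, ← Finset.sum_smul, hc1, one_smul,
      sub_self]
  rw [hzero, norm_zero] at id1
  -- pointwise comparison
  have hpt : ∀ i ∈ s, ∀ j ∈ s,
      c i * c j * ‖(z i - w₀) - (z j - w₀)‖ ^ 2
        ≤ c i * c j * ‖(a (idx i) - ζ) - (a (idx j) - ζ)‖ ^ 2 := by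
    intro i hi j hj
    have hzi := (hidx i hi).2
    have hzj := (hidx j hj).2
    have e1 : (z i - w₀) - (z j - w₀) = y (idx i) - y (idx j) := by
      rw [← hzi, ← hzj]; abel
    have e2 : (a (idx i) - ζ) - (a (idx j) - ζ) = a (idx i) - a (idx j) := by abel
    rw [e1, e2]
    have := hk (idx i) (idx j)
    have hsq : ‖y (idx i) - y (idx j)‖ ^ 2 ≤ ‖a (idx i) - a (idx j)‖ ^ 2 := by
      nlinarith [norm_nonneg (y (idx i) - y (idx j)), norm_nonneg (a (idx i) - a (idx j))]
    have hcc : 0 ≤ c i * c j := mul_nonneg (hc0 i hi) (hc0 j hj)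
    exact mul_le_mul_of_nonneg_left hsq hcc
  have hsum_le : ∑ i ∈ s, ∑ j ∈ s, c i * c j * ‖(z i - w₀) - (z j - w₀)‖ ^ 2
      ≤ ∑ i ∈ s, ∑ j ∈ s, c i * c j * ‖(a (idx i) - ζ) - (a (idx j) - ζ)‖ ^ 2 :=
    Finset.sum_le_sum fun i hi => Finset.sum_le_sum fun j hj => hpt i hi j hj
  -- active identity
  have hactive : ∑ i ∈ s, c i * ‖z i - w₀‖ ^ 2
      = ∑ i ∈ s, c i * ‖a (idx i) - ζ‖ ^ 2 + M := by
    have : ∀ i ∈ s, c i * ‖z i - w₀‖ ^ 2 = c i * ‖a (idx i) - ζ‖ ^ 2 + c i * M := by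
      intro i hi
      have hmem : idx i ∈ T := (hidx i hi).1
      have hkey : ‖w₀ - y (idx i)‖ ^ 2 - ‖ζ - a (idx i)‖ ^ 2 = M := hmem
      rw [← (hidx i hi).2, norm_sub_rev (y (idx i)) w₀, norm_sub_rev (a (idx i)) ζ]
      linear_combination c i * hkey
    rw [Finset.sum_congr rfl this, Finset.sum_add_distrib, ← Finset.sum_mul, hc1, one_mul]
  have hfinal : 2 * ‖∑ i ∈ s, c i • (a (idx i) - ζ)‖ ^ 2 ≥ 0 := by positivity
  nlinarith [hsum_le, id1, id2, hactive, hfinal, hM]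

set_option maxHeartbeats 1600000 in
omit [InnerProductSpace ℝ H] in
lemma norm_le_of_sq_le' {w : H} {c : ℝ} (hc : 0 ≤ c) (h : ‖w‖ ^ 2 ≤ c) :
    ‖w‖ ≤ Real.sqrt c := (Real.le_sqrt (norm_nonneg w) hc).mpr h

set_option maxHeartbeats 1600000 in
lemma balls_inter [CompleteSpace H] {ι' : Type*} (Y : ι' → H) (R : ι' → ℝ)
    (hFIP : ∀ F : Finset ι', ∃ w, ∀ i ∈ F, ‖w - Y i‖ ≤ R i) :
    ∃ w, ∀ i, ‖w - Y i‖ ≤ R i := by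
  classical
  cases isEmpty_or_nonempty ι' with
  | inl h => exact ⟨0, fun i => (IsEmpty.false i).elim⟩
  | inr hne =>
  obtain ⟨i₀⟩ := hne
  set C : Finset ι' → Set H := fun F => {w | ∀ i ∈ F, ‖w - Y i‖ ≤ R i} with hCdef
  have hCball : ∀ F, C F = ⋂ i ∈ F, Metric.closedBall (Y i) (R i) := by
    intro F
    ext w
    simp [hCdef, Metric.mem_closedBall, dist_eq_norm]
  have hCconv : ∀ F, Convex ℝ (C F) := by
    intro F; rw [hCball]
    exact convex_iInter₂ fun i _ => convex_closedBall _ _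
  have hCclosed : ∀ F, IsClosed (C F) := by
    intro F; rw [hCball]
    exact isClosed_biInter fun i _ => Metric.isClosed_closedBall
  have hCne : ∀ F, (C F).Nonempty := fun F => hFIP F
  have hmono : ∀ {F G : Finset ι'}, F ⊆ G → C G ⊆ C F :=
    fun {F G} hFG w hw i hi => hw i (hFG hi)
  choose v hvC hvmin using fun F =>
    exists_norm_eq_iInf_of_complete_convex (hCne F) (hCclosed F).isComplete (hCconv F) 0
  -- minimality of the projection
  have hvle : ∀ F, ∀ w ∈ C F, ‖v F‖ ≤ ‖w‖ := by
    intro F w hw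
    have h1 : ‖(0 : H) - v F‖ ≤ ‖(0 : H) - w‖ := by
      rw [hvmin F]
      exact ciInf_le ⟨0, Set.forall_mem_range.2 fun _ => norm_nonneg _⟩ (⟨w, hw⟩ : C F)
    simpa [zero_sub, norm_neg] using h1
  -- parallelogram estimate
  have hpar : ∀ F, ∀ w ∈ C F, ‖v F - w‖ ^ 2 ≤ 2 * ‖w‖ ^ 2 - 2 * ‖v F‖ ^ 2 := by
    intro F w hw
    have hmid : (2⁻¹ : ℝ) • (v F + w) ∈ C F := by
      have := hCconv F (hvC F) hw (by norm_num : (0:ℝ) ≤ 2⁻¹) (by norm_num : (0:ℝ) ≤ 2⁻¹)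
        (by norm_num)
      rwa [← smul_add] at this
    have h1 : ‖v F‖ ≤ ‖(2⁻¹ : ℝ) • (v F + w)‖ := hvle F _ hmid
    have h2 : ‖(2⁻¹ : ℝ) • (v F + w)‖ = 2⁻¹ * ‖v F + w‖ := by
      rw [norm_smul, Real.norm_eq_abs]; norm_num
    have h3 : ‖v F + w‖ ^ 2 + ‖v F - w‖ ^ 2 = 2 * ‖v F‖ ^ 2 + 2 * ‖w‖ ^ 2 := by
      rw [norm_add_sq_real, norm_sub_sq_real]; ring
    have h5 : ‖v F‖ ^ 2 ≤ (2⁻¹ * ‖v F + w‖) ^ 2 := by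
      rw [← h2]; exact pow_le_pow_left₀ (norm_nonneg _) h1 2
    nlinarith [h5, h3]
  -- uniform upper bound
  have hbound : ∀ F, ‖v F‖ ≤ ‖Y i₀‖ + R i₀ := by
    intro F
    have h1 : v (F ∪ {i₀}) ∈ C F := hmono Finset.subset_union_left (hvC _)
    have h2 : ‖v (F ∪ {i₀}) - Y i₀‖ ≤ R i₀ :=
      hvC (F ∪ {i₀}) i₀ (Finset.mem_union_right _ (Finset.mem_singleton_self _))
    have h3 : ‖v (F ∪ {i₀})‖ ≤ ‖Y i₀‖ + R i₀ := by
      have := norm_sub_norm_le (v (F ∪ {i₀})) (Y i₀)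
      linarith
    exact le_trans (hvle F _ h1) h3
  set d : ℝ := sSup (Set.range fun F => ‖v F‖) with hddef
  have hdbdd : BddAbove (Set.range fun F => ‖v F‖) :=
    ⟨‖Y i₀‖ + R i₀, Set.forall_mem_range.2 hbound⟩
  have hdle : ∀ F, ‖v F‖ ≤ d := fun F => le_csSup hdbdd (Set.mem_range_self F)
  have hd0 : 0 ≤ d := le_trans (norm_nonneg _) (hdle ∅)
  -- choose an increasing sequence of finite sets approaching the sup
  have hseq : ∀ n : ℕ, ∃ F, d - 1 / (n + 1) < ‖v F‖ := by
    intro n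
    have h1 : d - 1 / (n + 1) < d := by
      have : (0:ℝ) < 1 / (n + 1) := by positivity
      linarith
    obtain ⟨r, ⟨F, rfl⟩, hr⟩ :=
      exists_lt_of_lt_csSup ⟨‖v ∅‖, Set.mem_range_self ∅⟩ h1
    exact ⟨F, hr⟩
  choose Fseq hFseq using hseq
  set G : ℕ → Finset ι' := fun n => (Finset.range (n + 1)).sup Fseq with hGdef
  have hFsubG : ∀ n, Fseq n ⊆ G n := fun n =>
    Finset.le_sup (Finset.mem_range.2 (Nat.lt_succ_self n))
  have hGmono : ∀ {m n : ℕ}, m ≤ n → G m ⊆ G n := fun {m n} h =>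
    Finset.sup_mono (Finset.range_subset_range.2 (Nat.succ_le_succ h))
  have hvG : ∀ n, d - 1 / (n + 1) < ‖v (G n)‖ := fun n =>
    lt_of_lt_of_le (hFseq n) (hvle _ _ (hmono (hFsubG n) (hvC _)))
  -- a quantitative estimate used twice
  have hquant : ∀ (F F' : Finset ι') (n : ℕ), F ⊆ F' → d - 1 / (n + 1) < ‖v F‖ →
      ‖v F - v F'‖ ^ 2 ≤ 4 * d * (1 / (n + 1)) := by
    intro F F' n hFF' hF
    have h1 : v F' ∈ C F := hmono hFF' (hvC _)
    have h2 := hpar F _ h1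
    have h3 := hdle F'
    have h4 := hdle F
    have h5 : (0:ℝ) ≤ ‖v F'‖ := norm_nonneg _
    have h6 : (0:ℝ) ≤ ‖v F‖ := norm_nonneg _
    have hA : d - ‖v F‖ ≤ 1 / (n + 1) := by linarith
    have hB : (0:ℝ) ≤ d - ‖v F‖ := by linarith
    have hC : d + ‖v F‖ ≤ 2 * d := by linarith
    have hprod : (d - ‖v F‖) * (d + ‖v F‖) ≤ (1 / (n + 1)) * (2 * d) :=
      mul_le_mul hA hC (by linarith) (by positivity)
    have hsq : ‖v F'‖ * ‖v F'‖ ≤ d * d := mul_le_mul h3 h3 h5 hd0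
    nlinarith [h2, hprod, hsq]
  have hCauchyEst : ∀ m n : ℕ, m ≤ n →
      ‖v (G m) - v (G n)‖ ≤ Real.sqrt (4 * d * (1 / (m + 1))) := by
    intro m n hmn
    refine norm_le_of_sq_le' (by positivity) ?_
    exact hquant (G m) (G n) m (hGmono hmn) (hvG m)
  -- the sequence is Cauchy
  have hb0 : Filter.Tendsto (fun N : ℕ => 2 * Real.sqrt (4 * d * (1 / (N + 1))))
      Filter.atTop (nhds 0) := by
    have h1 : Filter.Tendsto (fun N : ℕ => 4 * d * (1 / (N + 1))) Filter.atTop (nhds 0) := by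
      have h2 := tendsto_one_div_add_atTop_nhds_zero_nat.const_mul (4 * d)
      simpa using h2
    have h3 : Filter.Tendsto (fun N : ℕ => Real.sqrt (4 * d * (1 / (N + 1))))
        Filter.atTop (nhds 0) := by
      have := (Real.continuous_sqrt.tendsto 0).comp h1
      simpa [Function.comp_def] using this
    have h4 := h3.const_mul (2:ℝ)
    simpa using h4
  have hCauchy : CauchySeq (fun n => v (G n)) := by
    refine cauchySeq_of_le_tendsto_0 (fun N : ℕ => 2 * Real.sqrt (4 * d * (1 / (N + 1))))
      (fun n m N hNn hNm => ?_) hb0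
    have h1 := hCauchyEst N n hNn
    have h2 := hCauchyEst N m hNm
    have h3 : dist (v (G n)) (v (G m)) ≤ dist (v (G n)) (v (G N)) + dist (v (G N)) (v (G m)) :=
      dist_triangle _ _ _
    simp only [dist_eq_norm] at h3 ⊢
    show ‖v (G n) - v (G m)‖ ≤ 2 * Real.sqrt (4 * d * (1 / (N + 1)))
    have h4 : ‖v (G n) - v (G N)‖ = ‖v (G N) - v (G n)‖ := norm_sub_rev _ _
    linarith
  obtain ⟨w, hw⟩ := cauchySeq_tendsto_of_complete hCauchy
  refine ⟨w, fun i => ?_⟩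
  -- final limiting argument
  have hkey : ∀ n : ℕ, ‖v (G n) - Y i‖ ≤ R i + Real.sqrt (4 * d * (1 / (n + 1))) := by
    intro n
    set u := v (G n ∪ {i}) with hudef
    have h1 : ‖u - Y i‖ ≤ R i :=
      hvC (G n ∪ {i}) i (Finset.mem_union_right _ (Finset.mem_singleton_self _))
    have h2 : ‖v (G n) - u‖ ≤ Real.sqrt (4 * d * (1 / (n + 1))) := by
      refine norm_le_of_sq_le' (by positivity) ?_
      exact hquant (G n) (G n ∪ {i}) n Finset.subset_union_left (hvG n)
    calc ‖v (G n) - Y i‖ ≤ ‖v (G n) - u‖ + ‖u - Y i‖ := by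
          have : v (G n) - Y i = (v (G n) - u) + (u - Y i) := by abel
          rw [this]; exact norm_add_le _ _
      _ ≤ R i + Real.sqrt (4 * d * (1 / (n + 1))) := by linarith
  have hlim1 : Filter.Tendsto (fun n => ‖v (G n) - Y i‖) Filter.atTop (nhds ‖w - Y i‖) :=
    ((hw.sub tendsto_const_nhds).norm)
  have hlim2 : Filter.Tendsto (fun n : ℕ => R i + Real.sqrt (4 * d * (1 / (n + 1))))
      Filter.atTop (nhds (R i)) := by
    have h3 : Filter.Tendsto (fun N : ℕ => Real.sqrt (4 * d * (1 / (N + 1))))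
        Filter.atTop (nhds 0) := by
      have h1 : Filter.Tendsto (fun N : ℕ => 4 * d * (1 / (N + 1))) Filter.atTop (nhds 0) := by
        have h2 := tendsto_one_div_add_atTop_nhds_zero_nat.const_mul (4 * d)
        simpa using h2
      have := (Real.continuous_sqrt.tendsto 0).comp h1
      simpa [Function.comp_def] using this
    have := tendsto_const_nhds.add h3 (f := fun _ : ℕ => R i) (x := Filter.atTop)
    simpa using this
  exact le_of_tendsto_of_tendsto' hlim1 hlim2 hkey

lemma cayley_of_mono {a b a' b' : H} (h : 0 ≤ ⟪b - b', a - a'⟫) :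
    ‖(a - b) - (a' - b')‖ ≤ ‖(a + b) - (a' + b')‖ := by
  have := cayley_sq a b a' b'
  exact norm_le_norm_of_sq_le (by linarith)

/-- Converse direction. -/

lemma mono_of_cayley {u v a b : H} (h : ‖(u - v) - (a - b)‖ ≤ ‖(u + v) - (a + b)‖) :
    0 ≤ ⟪v - b, u - a⟫ := by
  have h1 := cayley_sq u v a b
  have h2 : ‖(u - v) - (a - b)‖ ^ 2 ≤ ‖(u + v) - (a + b)‖ ^ 2 :=
    pow_le_pow_left₀ (norm_nonneg _) h 2
  linarith

/-- Every monotone relation extends to a maximal monotone relation. -/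

lemma exists_maximal_monotone_ext (B₀ : Set (H × H)) (hB₀ : MonotoneRel B₀) :
    ∃ B, MaximalMonotoneRel B ∧ B₀ ⊆ B := by
  obtain ⟨B, hB₀B, hBmax⟩ := zorn_subset_nonempty {B : Set (H × H) | MonotoneRel B}
    (fun c hcS hchain hcne => by
      refine ⟨⋃₀ c, ?_, fun s hs => Set.subset_sUnion_of_mem hs⟩
      rintro p ⟨s, hs, hps⟩ p' ⟨s', hs', hps'⟩
      rcases hchain.total hs hs' with h | h
      · exact hcS hs' p (h hps) p' hps'
      · exact hcS hs p hps p' (h hps')) B₀ hB₀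
  exact ⟨B, ⟨hBmax.prop, fun C hC hBC => Set.Subset.antisymm (hBmax.2 hC hBC) hBC⟩, hB₀B⟩

/-- Minty's surjectivity theorem. -/

lemma minty_surj [CompleteSpace H] {B : Set (H × H)} (hB : MaximalMonotoneRel B) (z : H) :
    ∃ p ∈ B, p.1 + p.2 = z := by
  classical
  have hmono := hB.1
  have hFIP : ∀ F : Finset ↥B, ∃ w, ∀ i ∈ F, ‖w - (i.1.1 - i.1.2)‖ ≤ ‖z - (i.1.1 + i.1.2)‖ := by
    intro F
    rcases F.eq_empty_or_nonempty with rfl | hFne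
    · exact ⟨0, by simp⟩
    · have : Nonempty ↥F := hFne.to_subtype
      obtain ⟨w, hw⟩ := kirszbraun_finite (κ := ↥F)
        (fun i => i.1.1.1 + i.1.1.2) (fun i => i.1.1.1 - i.1.1.2)
        (fun i j => cayley_of_mono (hmono _ i.1.2 _ j.1.2)) z
      exact ⟨w, fun i hi => hw ⟨i, hi⟩⟩
  obtain ⟨w, hw⟩ := balls_inter (ι' := ↥B) (fun i => i.1.1 - i.1.2)
    (fun i => ‖z - (i.1.1 + i.1.2)‖) (fun F => hFIP F)
  set u := (2⁻¹ : ℝ) • (z + w) with hudef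
  set v := (2⁻¹ : ℝ) • (z - w) with hvdef
  have huv : u + v = z := by
    rw [hudef, hvdef, ← smul_add]
    have : z + w + (z - w) = (2 : ℝ) • z := by
      rw [two_smul]; abel
    rw [this, smul_smul]; norm_num
  have huv2 : u - v = w := by
    rw [hudef, hvdef, ← smul_sub]
    have : z + w - (z - w) = (2 : ℝ) • w := by
      rw [two_smul]; abel
    rw [this, smul_smul]; norm_num
  have hrel : ∀ p ∈ B, (0:ℝ) ≤ ⟪v - p.2, u - p.1⟫ := by
    intro p hp
    refine mono_of_cayley ?_
    rw [huv, huv2]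
    exact hw ⟨p, hp⟩
  have hmono' : MonotoneRel (insert (u, v) B) := by
    rintro p (rfl | hp) p' (rfl | hp')
    · simp
    · exact hrel p' hp'
    · have := hrel p hp
      have e : (p.2 - v) = -(v - p.2) := by abel
      have e' : (p.1 - u) = -(u - p.1) := by abel
      rw [e, e', inner_neg_neg]
      exact this
    · exact hmono p hp p' hp'
  have heq : insert (u, v) B = B := hB.2 _ hmono' (Set.subset_insert _ _)
  have huvB : (u, v) ∈ B := heq ▸ Set.mem_insert _ _
  exact ⟨(u, v), huvB, huv⟩

/-- Positive scaling of the second coordinate preserves maximal monotonicity. -/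

lemma maximal_scale {B : Set (H × H)} (hB : MaximalMonotoneRel B) {lam : ℝ} (hlam : 0 < lam) :
    MaximalMonotoneRel ((fun p : H × H => (p.1, lam • p.2)) '' B) := by
  have hmonoscale : ∀ (l : ℝ), 0 < l → ∀ (D : Set (H × H)), MonotoneRel D →
      MonotoneRel ((fun p : H × H => (p.1, l • p.2)) '' D) := by
    rintro l hl D hD p ⟨q, hq, rfl⟩ p' ⟨q', hq', rfl⟩
    have := hD q hq q' hq'
    simp only
    rw [← smul_sub, real_inner_smul_left]
    exact mul_nonneg hl.le this
  constructor
  · exact hmonoscale lam hlam B hB.1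
  · intro C hC hBC
    set C' := (fun p : H × H => (p.1, lam⁻¹ • p.2)) '' C with hC'def
    have hC'mono : MonotoneRel C' := hmonoscale lam⁻¹ (inv_pos.mpr hlam) C hC
    have hBC' : B ⊆ C' := by
      intro p hp
      refine ⟨(p.1, lam • p.2), hBC ⟨p, hp, rfl⟩, ?_⟩
      simp [smul_smul, inv_mul_cancel₀ (ne_of_gt hlam)]
    have hC'B : C' = B := hB.2 C' hC'mono hBC'
    refine Set.Subset.antisymm ?_ hBC
    intro p hp
    have hp' : (p.1, lam⁻¹ • p.2) ∈ C' := ⟨p, hp, rfl⟩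
    rw [hC'B] at hp'
    refine ⟨(p.1, lam⁻¹ • p.2), hp', ?_⟩
    simp [smul_smul, mul_inv_cancel₀ (ne_of_gt hlam)]

end Auxiliary

set_option maxHeartbeats 1600000 in
/-- Interpolation (extension) with the class `M_μ` of maximal `μ`-strongly monotone relations:
`{(xᵢ, qᵢ)}` extends to a maximal monotone, `μ`-strongly monotone relation iff
`⟨xᵢ − xⱼ, qᵢ − qⱼ⟩ ≥ μ‖xᵢ − xⱼ‖²` for all `i, j`. -/
theorem mu_strongly_monotone_interpolation
    {H : Type*} [NormedAddCommGroup H] [InnerProductSpace ℝ H] [CompleteSpace H]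
    {μ : ℝ} (hμ : 0 < μ) {ι : Type*} (x q : ι → H) :
    (∃ A : Set (H × H), MaximalMonotoneRel A ∧ StronglyMonotoneRel μ A ∧
        ∀ i, (x i, q i) ∈ A) ↔
      ∀ i j, ⟪x i - x j, q i - q j⟫ ≥ μ * ‖x i - x j‖ ^ 2 := by
  constructor
  · rintro ⟨A, _, hstrong, hmem⟩ i j
    have := hstrong _ (hmem i) _ (hmem j)
    rwa [real_inner_comm] at this
  · intro h
    -- shifted data
    set B₀ : Set (H × H) := Set.range (fun i => (x i, q i - μ • x i)) with hB₀def
    have hB₀mono : MonotoneRel B₀ := by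
      rintro p ⟨i, rfl⟩ p' ⟨j, rfl⟩
      simp only
      have e : (q i - μ • x i) - (q j - μ • x j) = (q i - q j) - μ • (x i - x j) := by
        rw [smul_sub]; abel
      rw [e, inner_sub_left, real_inner_smul_left, real_inner_self_eq_norm_sq]
      have := h i j
      rw [real_inner_comm] at this
      linarith
    obtain ⟨B, hBmax, hB₀B⟩ := exists_maximal_monotone_ext B₀ hB₀mono
    set A := (fun p : H × H => (p.1, p.2 + μ • p.1)) '' B with hAdef
    have hmemA : ∀ i, (x i, q i) ∈ A := by
      intro i
      refine ⟨(x i, q i - μ • x i), hB₀B ⟨i, rfl⟩, ?_⟩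
      simp
    have hstrongA : StronglyMonotoneRel μ A := by
      rintro p ⟨r, hr, rfl⟩ p' ⟨r', hr', rfl⟩
      simp only
      have e : (r.2 + μ • r.1) - (r'.2 + μ • r'.1) = (r.2 - r'.2) + μ • (r.1 - r'.1) := by
        rw [smul_sub]; abel
      rw [e, inner_add_left, real_inner_smul_left, real_inner_self_eq_norm_sq]
      have := hBmax.1 r hr r' hr'
      linarith
    have hmonoA : MonotoneRel A := by
      intro p hp p' hp'
      have := hstrongA p hp p' hp'
      have h2 : (0:ℝ) ≤ μ * ‖p.1 - p'.1‖ ^ 2 := by positivity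
      linarith
    -- maximality of A via Minty for the scaled relation
    have hmaxA : ∀ C : Set (H × H), MonotoneRel C → A ⊆ C → C = A := by
      intro C hC hAC
      refine Set.Subset.antisymm ?_ hAC
      rintro ⟨u, v⟩ huv
      -- solve (1+μ) • a + b = u + v with (a, b) ∈ B
      have hlam : (0:ℝ) < (1 + μ)⁻¹ := by positivity
      have hscaled := maximal_scale hBmax hlam
      obtain ⟨p, ⟨r, hrB, rfl⟩, hps⟩ := minty_surj hscaled ((1 + μ)⁻¹ • (u + v))
      -- hps : r.1 + (1+μ)⁻¹ • r.2 = (1+μ)⁻¹ • (u+v)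
      have hsum : (1 + μ) • r.1 + r.2 = u + v := by
        have h1 : (1 + μ) • (r.1 + (1 + μ)⁻¹ • r.2) = (1 + μ) • ((1 + μ)⁻¹ • (u + v)) := by
          rw [hps]
        have hne : (1 + μ) ≠ 0 := by positivity
        rw [smul_add, smul_smul, mul_inv_cancel₀ hne, one_smul, smul_smul,
          mul_inv_cancel₀ hne, one_smul] at h1
        exact h1
      -- the corresponding element of A
      have hmemxA : (r.1, r.2 + μ • r.1) ∈ A := ⟨r, hrB, rfl⟩
      have hxq : r.1 + (r.2 + μ • r.1) = u + v := by
        rw [← hsum, add_smul, one_smul]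
        abel
      have hrelC := hC (u, v) huv (r.1, r.2 + μ • r.1) (hAC hmemxA)
      -- v - (r.2 + μ • r.1) = -(u - r.1)
      have hvq : v - (r.2 + μ • r.1) = -(u - r.1) := by
        have h2 : v = r.1 + (r.2 + μ • r.1) - u := by rw [hxq]; abel
        rw [h2, neg_sub]; abel
      simp only at hrelC
      rw [hvq, inner_neg_left] at hrelC
      have h0 : ⟪u - r.1, u - r.1⟫ ≤ 0 := by linarith
      have hzero : u - r.1 = 0 := by
        have hnn : (0:ℝ) ≤ ⟪u - r.1, u - r.1⟫ := real_inner_self_nonneg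
        have heq0 : ⟪u - r.1, u - r.1⟫ = 0 := le_antisymm h0 hnn
        exact inner_self_eq_zero.mp heq0
      have hu : u = r.1 := by rwa [sub_eq_zero] at hzero
      have hv : v = r.2 + μ • r.1 := by
        have h2 : u + v = u + (r.2 + μ • r.1) := by
          rw [hxq.symm, hu]
        exact add_left_cancel h2
      rw [hu, hv]
      exact hmemxA
    exact ⟨A, ⟨hmonoA, hmaxA⟩, hstrongA, hmemA⟩
end

section
/- Let H be a real Hilbert space, β ∈ (0,∞), I an arbitrary index set, and (x_i, q_i) ∈ H × H for i ∈ I. Then there exists a β-cocoercive map Q : H → H with Q x_i = q_i for all i ∈ I if and only if ⟨x_i − x_j, q_i − q_j⟩ ≥ β‖q_i − q_j‖² for all i, j ∈ I. -/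
open RealInnerProductSpace Filter Topology

section CocoerciveAux

variable {H : Type*} [NormedAddCommGroup H] [InnerProductSpace ℝ H]

lemma median (a b c : H) :
    ‖(1/2:ℝ)•(a+b) - c‖^2 = ‖a-c‖^2/2 + ‖b-c‖^2/2 - ‖a-b‖^2/4 := by
  have h := parallelogram_law_with_norm ℝ ((1/2:ℝ)•(a+b) - c) ((1/2:ℝ)•(a-b))
  have e1 : (1/2:ℝ)•(a+b) - c + (1/2:ℝ)•(a-b) = a - c := by module
  have e2 : (1/2:ℝ)•(a+b) - c - (1/2:ℝ)•(a-b) = b - c := by module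
  have e3 : ‖(1/2:ℝ)•(a-b)‖ = ‖a-b‖/2 := by rw [norm_smul]; simp; ring
  rw [e1, e2, e3] at h
  nlinarith [h]

lemma sum_dist_sq {ι : Type*} (t : Finset ι) (w : ι → ℝ) (u : ι → H)
    (hw : ∑ i ∈ t, w i = 1) (z : H) :
    ∑ i ∈ t, w i * ‖u i - z‖^2
      = (∑ i ∈ t, w i * ‖u i - (∑ j ∈ t, w j • u j)‖^2) + ‖(∑ j ∈ t, w j • u j) - z‖^2 := by
  set b := ∑ j ∈ t, w j • u j with hb
  have key : ∀ i ∈ t, w i * ‖u i - z‖^2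
      = w i * ‖u i - b‖^2 + w i * (2 * ⟪u i - b, b - z⟫) + w i * ‖b - z‖^2 := by
    intro i _
    have h2 : u i - z = (u i - b) + (b - z) := by abel
    rw [h2, norm_add_sq_real]; ring
  rw [Finset.sum_congr rfl key, Finset.sum_add_distrib, Finset.sum_add_distrib]
  have c1 : ∑ i ∈ t, w i * (2*⟪u i - b, b - z⟫) = 0 := by
    have h3 : ∑ i ∈ t, w i * (2*⟪u i - b, b - z⟫) = 2 * ⟪∑ i ∈ t, w i • (u i - b), b - z⟫ := by
      rw [sum_inner, Finset.mul_sum]; apply Finset.sum_congr rfl; intro i _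
      rw [real_inner_smul_left]; ring
    rw [h3]
    have h4 : ∑ i ∈ t, w i • (u i - b) = 0 := by
      simp only [smul_sub, Finset.sum_sub_distrib, ← Finset.sum_smul, hw, one_smul, sub_self, hb]
    simp [h4]
  have c2 : ∑ i ∈ t, w i * ‖b - z‖^2 = ‖b - z‖^2 := by rw [← Finset.sum_mul, hw, one_mul]
  rw [c1, c2]; ring

-- double sum

lemma double_sum {ι : Type*} (t : Finset ι) (w : ι → ℝ) (u : ι → H)
    (hw : ∑ i ∈ t, w i = 1) :
    ∑ i ∈ t, ∑ j ∈ t, w i * w j * ‖u i - u j‖^2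
      = 2 * ∑ i ∈ t, w i * ‖u i - (∑ j ∈ t, w j • u j)‖^2 := by
  set b := ∑ j ∈ t, w j • u j with hb
  have key : ∀ i ∈ t, ∑ j ∈ t, w i * w j * ‖u i - u j‖^2
      = w i * ((∑ j ∈ t, w j * ‖u j - b‖^2) + ‖b - u i‖^2) := by
    intro i _
    rw [← sum_dist_sq t w u hw (u i), Finset.mul_sum]
    apply Finset.sum_congr rfl; intro j _
    rw [norm_sub_rev (u i)]; ring
  rw [Finset.sum_congr rfl key]
  have expand : ∑ i ∈ t, w i * ((∑ j ∈ t, w j * ‖u j - b‖^2) + ‖b - u i‖^2)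
      = (∑ i ∈ t, w i) * (∑ j ∈ t, w j * ‖u j - b‖^2) + ∑ i ∈ t, w i * ‖b - u i‖^2 := by
    rw [Finset.sum_mul]; rw [← Finset.sum_add_distrib]; apply Finset.sum_congr rfl
    intro i _; ring
  rw [expand, hw, one_mul]
  have : ∑ i ∈ t, w i * ‖b - u i‖^2 = ∑ i ∈ t, w i * ‖u i - b‖^2 := by
    apply Finset.sum_congr rfl; intro i _; rw [norm_sub_rev]
  rw [this]; ring

lemma key_calc {ι : Type*} (t : Finset ι) (w : ι → ℝ) (A C : ι → H) (R : ι → ℝ)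
    (p y : H) (m : ℝ)
    (hw0 : ∀ i ∈ t, 0 ≤ w i) (hw1 : ∑ i ∈ t, w i = 1)
    (hAC : ∀ i ∈ t, ∀ j ∈ t, ‖C i - C j‖ ≤ ‖A i - A j‖)
    (hpa : ∀ i ∈ t, ‖p - A i‖ ≤ R i)
    (hy : ∑ i ∈ t, w i • C i = y)
    (hact : ∀ i ∈ t, ‖y - C i‖^2 = R i^2 + m) : m ≤ 0 := by
  set VC := ∑ i ∈ t, w i * ‖C i - (∑ j ∈ t, w j • C j)‖^2 with hVC
  set VA := ∑ i ∈ t, w i * ‖A i - (∑ j ∈ t, w j • A j)‖^2 with hVA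
  -- S1 : ∑ w (R²+m) = VC
  have S1 : ∑ i ∈ t, w i * (R i^2 + m) = VC := by
    have h1 : ∑ i ∈ t, w i * ‖C i - y‖^2 = VC + ‖(∑ j ∈ t, w j • C j) - y‖^2 :=
      sum_dist_sq t w C hw1 y
    rw [hy, sub_self, norm_zero] at h1
    rw [show VC = ∑ i ∈ t, w i * ‖C i - y‖^2 by linarith [h1]]
    apply Finset.sum_congr rfl; intro i hi
    rw [norm_sub_rev, hact i hi]
  -- S2 : VC ≤ VA
  have S2 : VC ≤ VA := by
    have h2 := double_sum t w C hw1
    have h3 := double_sum t w A hw1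
    have h4 : ∑ i ∈ t, ∑ j ∈ t, w i * w j * ‖C i - C j‖^2
        ≤ ∑ i ∈ t, ∑ j ∈ t, w i * w j * ‖A i - A j‖^2 := by
      apply Finset.sum_le_sum; intro i hi
      apply Finset.sum_le_sum; intro j hj
      have := hAC i hi j hj
      have hsq : ‖C i - C j‖^2 ≤ ‖A i - A j‖^2 := by nlinarith [norm_nonneg (C i - C j)]
      exact mul_le_mul_of_nonneg_left hsq (mul_nonneg (hw0 i hi) (hw0 j hj))
    rw [h2, h3] at h4; linarith
  -- S3 : VA ≤ ∑ w R²
  have S3 : VA ≤ ∑ i ∈ t, w i * R i^2 := by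
    have h5 : ∑ i ∈ t, w i * ‖A i - p‖^2 = VA + ‖(∑ j ∈ t, w j • A j) - p‖^2 :=
      sum_dist_sq t w A hw1 p
    have h6 : ∑ i ∈ t, w i * ‖A i - p‖^2 ≤ ∑ i ∈ t, w i * R i^2 := by
      apply Finset.sum_le_sum; intro i hi
      have h7 : ‖A i - p‖ ≤ R i := by rw [norm_sub_rev]; exact hpa i hi
      have hsq : ‖A i - p‖^2 ≤ R i^2 := by nlinarith [norm_nonneg (A i - p)]
      exact mul_le_mul_of_nonneg_left hsq (hw0 i hi)
    nlinarith [sq_nonneg ‖(∑ j ∈ t, w j • A j) - p‖]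
  have S4 : ∑ i ∈ t, w i * (R i^2 + m) = (∑ i ∈ t, w i * R i^2) + m := by
    rw [Finset.sum_congr rfl (fun i _ => by ring :
        ∀ i ∈ t, w i * (R i^2 + m) = w i * R i^2 + w i * m),
      Finset.sum_add_distrib, ← Finset.sum_mul, hw1, one_mul]
  linarith

set_option maxHeartbeats 1000000 in
lemma finite_balls [CompleteSpace H] {ι : Type*} (a c : ι → H) (r : ι → ℝ) (p : H)
    (hp : ∀ i, ‖p - a i‖ ≤ r i) (hac : ∀ i j, ‖c i - c j‖ ≤ ‖a i - a j‖)
    (s : Finset ι) (hs : s.Nonempty) :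
    ∃ y : H, ∀ i ∈ s, ‖y - c i‖ ≤ r i := by
  classical
  have hr0 : ∀ i, 0 ≤ r i := fun i => le_trans (norm_nonneg _) (hp i)
  set F : H → ℝ := fun y => s.sup' hs fun i => ‖y - c i‖^2 - r i^2 with hF
  -- bounded below
  have hs2 := hs
  obtain ⟨i₀, hi₀⟩ := hs2
  have hbdd : BddBelow (Set.range F) := by
    refine ⟨-(s.sup' hs fun i => r i^2), ?_⟩
    rintro _ ⟨y, rfl⟩
    obtain ⟨i, hi, hieq⟩ := Finset.exists_mem_eq_sup' hs (fun i => ‖y - c i‖^2 - r i^2)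
    have h1 : r i ^2 ≤ s.sup' hs fun i => r i^2 := Finset.le_sup' (fun j => r j^2) hi
    have h2 : (0:ℝ) ≤ ‖y - c i‖^2 := sq_nonneg _
    simp only [hF, hieq]
    linarith
  have hFle : ∀ (y : H), ∀ i ∈ s, ‖y - c i‖^2 - r i^2 ≤ F y := by
    intro y i hi
    simp only [hF]
    exact Finset.le_sup' (fun j => ‖y - c j‖^2 - r j^2) hi
  have hFsup : ∀ (y : H) (b : ℝ), (∀ i ∈ s, ‖y - c i‖^2 - r i^2 ≤ b) → F y ≤ b := by
    intro y b hb
    simp only [hF]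
    exact Finset.sup'_le hs _ hb
  set m := ⨅ y, F y with hm
  have hmle : ∀ y, m ≤ F y := fun y => ciInf_le hbdd y
  -- minimizing sequence
  have hseq : ∀ n : ℕ, ∃ y, F y < m + 1/(n+1) := by
    intro n
    apply exists_lt_of_ciInf_lt
    rw [← hm]
    have : (0:ℝ) < 1/(n+1) := by positivity
    linarith
  choose Y hY using hseq
  -- midpoint inequality
  have hmid : ∀ u v : H, F ((1/2:ℝ)•(u+v)) ≤ (F u + F v)/2 - ‖u-v‖^2/4 := by
    intro u v
    apply hFsup
    intro i hi
    have h1 : ‖u - c i‖^2 - r i^2 ≤ F u := hFle u i hi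
    have h2 : ‖v - c i‖^2 - r i^2 ≤ F v := hFle v i hi
    have h3 := median u v (c i)
    linarith
  -- Cauchy
  have hdist : ∀ n k : ℕ, ‖Y n - Y k‖^2 < 2*(1/(n+1) + 1/(k+1)) := by
    intro n k
    have h1 := hmid (Y n) (Y k)
    have h2 := hmle ((1/2:ℝ)•(Y n + Y k))
    have h3 := hY n
    have h4 := hY k
    linarith
  have hcauchy : CauchySeq Y := by
    rw [Metric.cauchySeq_iff']
    intro ε hε
    obtain ⟨N, hN⟩ := exists_nat_gt (4/ε^2)
    refine ⟨N, fun n hn => ?_⟩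
    have h1 := hdist n N
    have h2 : (1:ℝ)/(n+1) ≤ 1/(N+1) := by
      apply one_div_le_one_div_of_le (by positivity)
      exact_mod_cast by omega
    have h3 : ‖Y n - Y N‖^2 < 4/(N+1) := by
      have he : (4:ℝ)/(N+1) = 4*(1/(N+1)) := by ring
      rw [he]; linarith
    have h5 : (4:ℝ)/(N+1) < ε^2 := by
      rw [div_lt_iff₀ (by positivity)]
      rw [div_lt_iff₀ (by positivity)] at hN
      nlinarith
    have h6 : ‖Y n - Y N‖^2 < ε^2 := by linarith
    have := lt_of_pow_lt_pow_left₀ 2 (le_of_lt hε) h6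
    rwa [dist_eq_norm]
  obtain ⟨y₀, hy₀⟩ := cauchySeq_tendsto_of_complete hcauchy
  -- limit satisfies f_i y₀ ≤ m
  have hle : ∀ i ∈ s, ‖y₀ - c i‖^2 - r i^2 ≤ m := by
    intro i hi
    have ht1 : Tendsto (fun n => ‖Y n - c i‖^2 - r i^2) atTop (𝓝 (‖y₀ - c i‖^2 - r i^2)) := by
      have : Continuous (fun z : H => ‖z - c i‖^2 - r i^2) := by continuity
      exact (this.tendsto y₀).comp hy₀
    have ht2 : Tendsto (fun n : ℕ => m + 1/(n+1)) atTop (𝓝 m) := by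
      have := tendsto_one_div_add_atTop_nhds_zero_nat (𝕜 := ℝ)
      simpa using tendsto_const_nhds.add this
    refine le_of_tendsto_of_tendsto' ht1 ht2 (fun n => ?_)
    have h1 : ‖Y n - c i‖^2 - r i^2 ≤ F (Y n) := hFle (Y n) i hi
    have h2 := hY n
    linarith
  -- main claim : m ≤ 0
  have hm0 : m ≤ 0 := by
    by_contra hm0
    push_neg at hm0
    have hFy₀ : F y₀ = m := le_antisymm (hFsup y₀ m hle) (hmle y₀)
    set T : Finset ι := s.filter (fun i => ‖y₀ - c i‖^2 - r i^2 = m) with hT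
    have hTne : T.Nonempty := by
      obtain ⟨i, hi, hieq⟩ := Finset.exists_mem_eq_sup' hs (fun i => ‖y₀ - c i‖^2 - r i^2)
      refine ⟨i, Finset.mem_filter.2 ⟨hi, ?_⟩⟩
      have : F y₀ = ‖y₀ - c i‖^2 - r i^2 := by simp only [hF]; exact hieq
      rw [← this, hFy₀]
    have hTsub : ∀ i ∈ T, ‖y₀ - c i‖^2 - r i^2 = m ∧ i ∈ s := by
      intro i hi; obtain ⟨h1, h2⟩ := Finset.mem_filter.1 hi; exact ⟨h2, h1⟩
    -- y₀ in convex hull of active centers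
    have hhull : y₀ ∈ convexHull ℝ (c '' (T : Set ι)) := by
      by_contra hy₀hull
      have hfin : (c '' (T : Set ι)).Finite := (T.finite_toSet.image c)
      have hcomp : IsCompact (convexHull ℝ (c '' (T : Set ι))) := hfin.isCompact_convexHull (𝕜 := ℝ)
      obtain ⟨f, u, hfu, hfb⟩ := geometric_hahn_banach_point_closed
        (convex_convexHull ℝ _) hcomp.isClosed hy₀hull
      set d := (InnerProductSpace.toDual ℝ H).symm f with hd
      have hdz : ∀ z : H, ⟪d, z⟫ = f z := fun z => InnerProductSpace.toDual_symm_apply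
      set δ := u - f y₀ with hδ
      have hδpos : 0 < δ := by simp [hδ]; linarith
      have hinner : ∀ i ∈ T, ⟪y₀ - c i, d⟫ ≤ -δ := by
        intro i hi
        have hci : c i ∈ convexHull ℝ (c '' (T : Set ι)) :=
          subset_convexHull ℝ _ ⟨i, by simp [hi], rfl⟩
        have := hfb _ hci
        rw [real_inner_comm, hdz, map_sub]
        simp [hδ]; linarith
      have hev : ∀ i ∈ s, ∀ᶠ t : ℝ in 𝓝[>] 0, ‖(y₀ + t • d) - c i‖^2 - r i^2 < m := by
        intro i hi
        by_cases hiT : i ∈ T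
        · have hfi : ‖y₀ - c i‖^2 - r i^2 = m := (hTsub i hiT).1
          have hip := hinner i hiT
          have hIoo : Set.Ioo (0:ℝ) (δ/(‖d‖^2+1)) ∈ 𝓝[>] (0:ℝ) :=
            Ioo_mem_nhdsGT (by positivity)
          filter_upwards [hIoo] with t ht
          obtain ⟨ht0, ht1⟩ := ht
          have hexp : ‖(y₀ + t • d) - c i‖^2
              = ‖y₀ - c i‖^2 + 2*(t*⟪y₀ - c i, d⟫) + t^2*‖d‖^2 := by
            have : (y₀ + t • d) - c i = (y₀ - c i) + t • d := by abel
            rw [this, norm_add_sq_real, real_inner_smul_right, norm_smul]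
            simp only [mul_pow, Real.norm_eq_abs, sq_abs]
          have hbound : t * ‖d‖^2 < δ := by
            have hX : (0:ℝ) < ‖d‖^2 + 1 := by positivity
            have h9 := (lt_div_iff₀ hX).1 ht1
            nlinarith [ht0]
          rw [hexp]
          nlinarith [mul_le_mul_of_nonneg_left hip (le_of_lt ht0)]
        · have hlt : ‖y₀ - c i‖^2 - r i^2 < m :=
            lt_of_le_of_ne (hle i hi) (by simp [hT, Finset.mem_filter, hi] at hiT; exact hiT)
          have hcont : Tendsto (fun t : ℝ => ‖(y₀ + t • d) - c i‖^2 - r i^2) (𝓝[>] 0)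
              (𝓝 (‖y₀ - c i‖^2 - r i^2)) := by
            have hc : Continuous (fun t : ℝ => ‖(y₀ + t • d) - c i‖^2 - r i^2) :=
              ((((continuous_const.add (continuous_id.smul continuous_const)).sub
                continuous_const).norm.pow 2).sub continuous_const)
            have h8 : Tendsto (fun t : ℝ => ‖(y₀ + t • d) - c i‖^2 - r i^2) (𝓝[>] (0:ℝ))
                (𝓝 (‖(y₀ + (0:ℝ) • d) - c i‖^2 - r i^2)) :=
              (hc.tendsto 0).mono_left nhdsWithin_le_nhds
            simpa using h8
          exact hcont.eventually_lt_const hlt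
      have hall : ∀ᶠ t : ℝ in 𝓝[>] 0, ∀ i ∈ s, ‖(y₀ + t • d) - c i‖^2 - r i^2 < m :=
        (eventually_all_finset s).2 hev
      obtain ⟨t, ht⟩ := hall.exists
      have hFlt : F (y₀ + t • d) < m := by
        simp only [hF]
        exact (Finset.sup'_lt_iff hs).2 ht
      exact absurd (hmle (y₀ + t • d)) (by linarith)
    -- extract convex combination and contradict via key_calc
    rw [convexHull_eq] at hhull
    obtain ⟨ι', t, w, z, hw0, hw1, hz, hcm⟩ := hhull
    obtain ⟨k₀, hk₀⟩ := hTne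
    have hj : ∀ i : ι', ∃ k, i ∈ t → (k ∈ T ∧ c k = z i) := by
      intro i
      by_cases hi : i ∈ t
      · obtain ⟨k, hk, hck⟩ := hz i hi
        exact ⟨k, fun _ => ⟨hk, hck⟩⟩
      · exact ⟨k₀, fun h => absurd h hi⟩
    choose j hjspec using hj
    have hcm' : ∑ i ∈ t, w i • (c ∘ j) i = y₀ := by
      rw [Finset.centerMass_eq_of_sum_1 _ _ hw1] at hcm
      rw [← hcm]
      apply Finset.sum_congr rfl
      intro i hi
      rw [Function.comp_apply, (hjspec i hi).2]
    have := key_calc t w (a ∘ j) (c ∘ j) (r ∘ j) p y₀ m hw0 hw1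
      (fun i _ k _ => hac (j i) (j k))
      (fun i _ => hp (j i))
      hcm'
      (fun i hi => by
        have := (hTsub (j i) (hjspec i hi).1).1
        simp only [Function.comp_apply]
        linarith)
    linarith
  -- conclude
  refine ⟨y₀, fun i hi => ?_⟩
  have h1 := hle i hi
  have h2 : ‖y₀ - c i‖^2 ≤ r i^2 := by linarith
  nlinarith [norm_nonneg (y₀ - c i), hr0 i]

set_option maxHeartbeats 1000000 in
lemma all_balls [CompleteSpace H] {ι : Type*} (a c : ι → H) (r : ι → ℝ) (p : H)
    (hp : ∀ i, ‖p - a i‖ ≤ r i) (hac : ∀ i j, ‖c i - c j‖ ≤ ‖a i - a j‖) :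
    ∃ y : H, ∀ i, ‖y - c i‖ ≤ r i := by
  classical
  rcases isEmpty_or_nonempty ι with hemp | hne
  · exact ⟨0, fun i => (hemp.false i).elim⟩
  obtain ⟨i₀⟩ := hne
  set C : Finset ι → Set H := fun s => {y | ∀ i ∈ insert i₀ s, ‖y - c i‖ ≤ r i} with hCdef
  have hCne : ∀ s, (C s).Nonempty := by
    intro s
    obtain ⟨y, hy⟩ := finite_balls a c r p hp hac (insert i₀ s) (Finset.insert_nonempty _ _)
    exact ⟨y, hy⟩
  have hCmono : ∀ {s t : Finset ι}, s ⊆ t → C t ⊆ C s := by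
    intro s t hst y hy i hi
    exact hy i (by
      rcases Finset.mem_insert.1 hi with h | h
      · exact Finset.mem_insert.2 (Or.inl h)
      · exact Finset.mem_insert.2 (Or.inr (hst h)))
  have hCmid : ∀ (s : Finset ι) (u v : H), u ∈ C s → v ∈ C s → (1/2:ℝ)•(u+v) ∈ C s := by
    intro s u v hu hv i hi
    have h1 : (1/2:ℝ)•(u+v) - c i = (1/2:ℝ)•((u - c i) + (v - c i)) := by module
    rw [h1, norm_smul]
    have h3 := norm_add_le (u - c i) (v - c i)
    have hu' := hu i hi
    have hv' := hv i hi
    have h2 : ‖(1/2:ℝ)‖ = 1/2 := by norm_num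
    rw [h2]
    linarith
  -- infimum of squared norms
  set e : Finset ι → ℝ := fun s => sInf ((fun y => ‖y‖^2) '' C s) with hedef
  have hbd : ∀ s, BddBelow ((fun y : H => ‖y‖^2) '' C s) := by
    intro s
    exact ⟨0, by rintro _ ⟨y, _, rfl⟩; positivity⟩
  have hene : ∀ s, ((fun y : H => ‖y‖^2) '' C s).Nonempty := fun s => (hCne s).image _
  have hele : ∀ (s : Finset ι) (y : H), y ∈ C s → e s ≤ ‖y‖^2 := by
    intro s y hy
    exact csInf_le (hbd s) ⟨y, hy, rfl⟩
  have hemono : ∀ {s t : Finset ι}, s ⊆ t → e s ≤ e t := by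
    intro s t hst
    exact csInf_le_csInf (hbd s) (hene t) (Set.image_mono (hCmono hst))
  set K := (r i₀ + ‖c i₀‖)^2 with hK
  have heK : ∀ s, e s ≤ K := by
    intro s
    obtain ⟨y, hy⟩ := hCne s
    refine le_trans (hele s y hy) ?_
    have h1 : ‖y - c i₀‖ ≤ r i₀ := hy i₀ (Finset.mem_insert_self _ _)
    have h2 : ‖y‖ ≤ r i₀ + ‖c i₀‖ := by
      calc ‖y‖ = ‖(y - c i₀) + c i₀‖ := by rw [sub_add_cancel]
        _ ≤ ‖y - c i₀‖ + ‖c i₀‖ := norm_add_le _ _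
        _ ≤ r i₀ + ‖c i₀‖ := by linarith
    nlinarith [norm_nonneg y]
  set D := sSup (Set.range e) with hD
  have hDbdd : BddAbove (Set.range e) := ⟨K, by rintro _ ⟨s, rfl⟩; exact heK s⟩
  have heD : ∀ s, e s ≤ D := fun s => le_csSup hDbdd ⟨s, rfl⟩
  -- approximating finsets
  have hsn : ∀ n : ℕ, ∃ s : Finset ι, D - 1/(n+1) < e s := by
    intro n
    have hlt : D - 1/(n+1) < D := by
      have : (0:ℝ) < 1/(n+1) := by positivity
      linarith
    obtain ⟨_, ⟨s, rfl⟩, h⟩ := exists_lt_of_lt_csSup (Set.range_nonempty e) hlt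
    exact ⟨s, h⟩
  choose sn hsn' using hsn
  set t : ℕ → Finset ι := fun n => (Finset.range (n+1)).biUnion sn with ht
  have htsub : ∀ n, sn n ⊆ t n := by
    intro n
    exact Finset.subset_biUnion_of_mem sn (Finset.mem_range.2 (Nat.lt_succ_self n))
  have htmono : ∀ {m n : ℕ}, m ≤ n → t m ⊆ t n := by
    intro m n hmn
    apply Finset.biUnion_subset_biUnion_of_subset_left
    intro k hk
    rw [Finset.mem_range] at hk ⊢
    omega
  have hetn : ∀ n, D - 1/(n+1) < e (t n) :=
    fun n => lt_of_lt_of_le (hsn' n) (hemono (htsub n))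
  -- approximate minimizers
  have hyn : ∀ n : ℕ, ∃ y ∈ C (t n), ‖y‖^2 < e (t n) + 1/(n+1) := by
    intro n
    have hlt : e (t n) < e (t n) + 1/(n+1) := by
      have : (0:ℝ) < 1/(n+1) := by positivity
      linarith
    obtain ⟨_, ⟨y, hy, rfl⟩, h⟩ := exists_lt_of_csInf_lt (hene (t n)) hlt
    exact ⟨y, hy, h⟩
  choose Y hYC hYlt using hyn
  -- key quantitative bound
  have hquad : ∀ (s : Finset ι) (u v : H), u ∈ C s → v ∈ C s →
      ‖u - v‖^2 ≤ 2*‖u‖^2 + 2*‖v‖^2 - 4*(e s) := by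
    intro s u v hu hv
    have h1 := median u v (0:H)
    simp only [sub_zero] at h1
    have h2 : e s ≤ ‖(1/2:ℝ)•(u+v)‖^2 := hele s _ (hCmid s u v hu hv)
    linarith
  have hYbound : ∀ n, ‖Y n‖^2 < D + 1/(n+1) := by
    intro n
    have := hYlt n
    have := heD (t n)
    linarith
  -- Cauchy
  have hdistb : ∀ N n : ℕ, N ≤ n → ‖Y n - Y N‖^2 ≤ 8/(N+1) := by
    intro N n hNn
    have hYnC : Y n ∈ C (t N) := hCmono (htmono hNn) (hYC n)
    have h1 := hquad (t N) (Y n) (Y N) hYnC (hYC N)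
    have h2 := hYbound n
    have h3 := hYbound N
    have h4 := hetn N
    have h5 : (1:ℝ)/(n+1) ≤ 1/(N+1) := by
      apply one_div_le_one_div_of_le (by positivity)
      exact_mod_cast by omega
    have he8 : (8:ℝ)/(N+1) = 2*(1/(N+1)) + 2*(1/(N+1)) + 4*(1/(N+1)) := by ring
    rw [he8]
    linarith
  have hcauchy : CauchySeq Y := by
    rw [Metric.cauchySeq_iff']
    intro ε hε
    obtain ⟨N, hN⟩ := exists_nat_gt (8/ε^2)
    refine ⟨N, fun n hn => ?_⟩
    have h1 := hdistb N n hn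
    have h5 : (8:ℝ)/(N+1) < ε^2 := by
      rw [div_lt_iff₀ (by positivity)]
      rw [div_lt_iff₀ (by positivity)] at hN
      nlinarith
    have h6 : ‖Y n - Y N‖^2 < ε^2 := by linarith
    have := lt_of_pow_lt_pow_left₀ 2 (le_of_lt hε) h6
    rwa [dist_eq_norm]
  obtain ⟨ylim, hylim⟩ := cauchySeq_tendsto_of_complete hcauchy
  refine ⟨ylim, fun i => ?_⟩
  -- second approximating sequence including i
  have hzn : ∀ n : ℕ, ∃ z ∈ C (t n ∪ {i}), ‖z‖^2 < e (t n ∪ {i}) + 1/(n+1) := by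
    intro n
    have hlt : e (t n ∪ {i}) < e (t n ∪ {i}) + 1/(n+1) := by
      have : (0:ℝ) < 1/(n+1) := by positivity
      linarith
    obtain ⟨_, ⟨z, hz, rfl⟩, h⟩ := exists_lt_of_csInf_lt (hene _) hlt
    exact ⟨z, hz, h⟩
  choose Z hZC hZlt using hzn
  have hZb : ∀ n, ‖Z n‖^2 < D + 1/(n+1) := by
    intro n
    have := hZlt n
    have := heD (t n ∪ {i})
    linarith
  have hZY : ∀ n, ‖Y n - Z n‖^2 ≤ 8/(n+1) := by
    intro n
    have hZC' : Z n ∈ C (t n) := hCmono Finset.subset_union_left (hZC n)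
    have h1 := hquad (t n) (Y n) (Z n) (hYC n) hZC'
    have h2 := hYbound n
    have h3 := hZb n
    have h4 := hetn n
    have he8 : (8:ℝ)/(n+1) = 2*(1/(n+1)) + 2*(1/(n+1)) + 4*(1/(n+1)) := by ring
    rw [he8]
    linarith
  have hZci : ∀ n, ‖Z n - c i‖ ≤ r i := by
    intro n
    exact hZC n i (Finset.mem_insert.2 (Or.inr (Finset.mem_union_right _ (Finset.mem_singleton_self i))))
  -- pass to the limit
  have hbound : ∀ n : ℕ, ‖ylim - c i‖ ≤ ‖ylim - Y n‖ + Real.sqrt (8/(n+1)) + r i := by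
    intro n
    have h1 : ‖Y n - Z n‖ ≤ Real.sqrt (8/(n+1)) := by
      have h2 := hZY n
      have h0 : ‖Y n - Z n‖ = Real.sqrt (‖Y n - Z n‖^2) := (Real.sqrt_sq (norm_nonneg _)).symm
      rw [h0]
      exact Real.sqrt_le_sqrt h2
    calc ‖ylim - c i‖ = ‖(ylim - Y n) + (Y n - Z n) + (Z n - c i)‖ := by abel_nf
      _ ≤ ‖(ylim - Y n) + (Y n - Z n)‖ + ‖Z n - c i‖ := norm_add_le _ _
      _ ≤ ‖ylim - Y n‖ + ‖Y n - Z n‖ + ‖Z n - c i‖ := by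
          have := norm_add_le (ylim - Y n) (Y n - Z n)
          linarith
      _ ≤ ‖ylim - Y n‖ + Real.sqrt (8/(n+1)) + r i := by
          have := hZci n
          linarith
  have htend : Tendsto (fun n : ℕ => ‖ylim - Y n‖ + Real.sqrt (8/(n+1)) + r i) atTop
      (𝓝 (0 + Real.sqrt 0 + r i)) := by
    have h1 : Tendsto (fun n : ℕ => ‖ylim - Y n‖) atTop (𝓝 0) := by
      have := (tendsto_const_nhds (x := ylim) (f := atTop (α := ℕ))).sub hylim
      have h2 := this.norm
      simpa using h2
    have h3 : Tendsto (fun n : ℕ => (8:ℝ)/(n+1)) atTop (𝓝 0) := by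
      have := tendsto_one_div_add_atTop_nhds_zero_nat.const_mul (8:ℝ)
      simp only [mul_zero] at this
      convert this using 2 with n
      ring
    have h4 := (Real.continuous_sqrt.tendsto 0).comp h3
    exact (h1.add h4).add tendsto_const_nhds
  have : ‖ylim - c i‖ ≤ 0 + Real.sqrt 0 + r i :=
    le_of_tendsto_of_tendsto' tendsto_const_nhds htend hbound
  simpa using this

lemma one_point [CompleteSpace H] {β : ℝ} (hβ : 0 < β) {ι : Type*} (x q : ι → H)
    (h : ∀ i j, ⟪x i - x j, q i - q j⟫ ≥ β * ‖q i - q j‖^2) (x₀ : H) :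
    ∃ q₀ : H, ∀ i, ⟪x₀ - x i, q₀ - q i⟫ ≥ β * ‖q₀ - q i‖^2 := by
  set σ : ℝ := 1/(2*β) with hσ
  have hσpos : 0 < σ := by positivity
  set a : ι → H := fun i => σ • x i with ha
  set c : ι → H := fun i => q i + σ • (x₀ - x i) with hc
  set r : ι → ℝ := fun i => σ * ‖x₀ - x i‖ with hr
  set p : H := σ • x₀ with hp'
  have hp : ∀ i, ‖p - a i‖ ≤ r i := by
    intro i
    have h1 : p - a i = σ • (x₀ - x i) := by rw [hp', ha, smul_sub]
    rw [h1, norm_smul, Real.norm_eq_abs, abs_of_pos hσpos, hr]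
  have hac : ∀ i j, ‖c i - c j‖ ≤ ‖a i - a j‖ := by
    intro i j
    have h1 : c i - c j = (q i - q j) - σ • (x i - x j) := by
      rw [hc]; simp only; module
    have h2 : a i - a j = σ • (x i - x j) := by rw [ha]; simp only; module
    rw [h1, h2]
    have hsq : ‖(q i - q j) - σ • (x i - x j)‖^2 ≤ ‖σ • (x i - x j)‖^2 := by
      rw [norm_sub_sq_real, real_inner_smul_right]
      have hij := h i j
      rw [real_inner_comm] at hij
      have hσβ : σ * β = 1/2 := by rw [hσ]; field_simp
      nlinarith [hij, hσpos, hβ]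
    have := Real.sqrt_le_sqrt hsq
    rwa [Real.sqrt_sq (norm_nonneg _), Real.sqrt_sq (norm_nonneg _)] at this
  obtain ⟨y, hy⟩ := all_balls a c r p hp hac
  refine ⟨y, fun i => ?_⟩
  have h1 : ‖y - c i‖^2 ≤ r i^2 := by
    have := hy i
    nlinarith [norm_nonneg (y - c i), this, mul_nonneg hσpos.le (norm_nonneg (x₀ - x i))]
  have h2 : y - c i = (y - q i) - σ • (x₀ - x i) := by rw [hc]; simp only; module
  rw [h2, norm_sub_sq_real, real_inner_smul_right, norm_smul, Real.norm_eq_abs,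
    abs_of_pos hσpos, hr] at h1
  have h3 : ⟪y - q i, x₀ - x i⟫ = ⟪x₀ - x i, y - q i⟫ := real_inner_comm _ _
  rw [h3] at h1
  have hσβ : σ * β = 1/2 := by rw [hσ]; field_simp
  simp only [mul_pow] at h1
  nlinarith [h1, hβ, hσpos]

end CocoerciveAux

/-- A map `Q : H → H` is `β`-cocoercive. -/
def Cocoercive {H : Type*} [NormedAddCommGroup H] [InnerProductSpace ℝ H]
    (β : ℝ) (Q : H → H) : Prop :=
  ∀ x y : H, ⟪Q x - Q y, x - y⟫ ≥ β * ‖Q x - Q y‖ ^ 2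

/-- Interpolation with the class `C_β` of `β`-cocoercive operators:
`{(xᵢ, qᵢ)}` is interpolable by a `β`-cocoercive map `Q : H → H` iff
`⟨xᵢ − xⱼ, qᵢ − qⱼ⟩ ≥ β‖qᵢ − qⱼ‖²` for all `i, j`. -/
theorem cocoercive_interpolation
    {H : Type*} [NormedAddCommGroup H] [InnerProductSpace ℝ H] [CompleteSpace H]
    {β : ℝ} (hβ : 0 < β) {ι : Type*} (x q : ι → H) :
    (∃ Q : H → H, Cocoercive β Q ∧ ∀ i, Q (x i) = q i) ↔
      ∀ i j, ⟪x i - x j, q i - q j⟫ ≥ β * ‖q i - q j‖ ^ 2 := by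
  constructor
  · rintro ⟨Q, hQ, hQx⟩ i j
    have h := hQ (x i) (x j)
    rw [hQx i, hQx j] at h
    rwa [real_inner_comm]
  · intro h
    -- the collection of admissible graphs
    set S : Set (Set (H × H)) :=
      {D | (∀ i, (x i, q i) ∈ D) ∧
        ∀ p₁ ∈ D, ∀ p₂ ∈ D, ⟪p₁.1 - p₂.1, p₁.2 - p₂.2⟫ ≥ β * ‖p₁.2 - p₂.2‖^2} with hS
    have hS0 : Set.range (fun i => (x i, q i)) ∈ S := by
      constructor
      · exact fun i => ⟨i, rfl⟩
      · rintro _ ⟨i, rfl⟩ _ ⟨j, rfl⟩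
        exact h i j
    have hchain : ∀ ch ⊆ S, IsChain (· ⊆ ·) ch → ch.Nonempty →
        ∃ ub ∈ S, ∀ s ∈ ch, s ⊆ ub := by
      intro ch hchS hch ⟨D₀, hD₀⟩
      refine ⟨⋃₀ ch, ⟨fun i => Set.mem_sUnion.2 ⟨D₀, hD₀, (hchS hD₀).1 i⟩, ?_⟩,
        fun s hs => Set.subset_sUnion_of_mem hs⟩
      rintro p₁ hp₁ p₂ hp₂
      obtain ⟨D₁, hD₁, hp₁'⟩ := hp₁
      obtain ⟨D₂, hD₂, hp₂'⟩ := hp₂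
      rcases hch.total hD₁ hD₂ with h12 | h21
      · exact (hchS hD₂).2 p₁ (h12 hp₁') p₂ hp₂'
      · exact (hchS hD₁).2 p₁ hp₁' p₂ (h21 hp₂')
    obtain ⟨M, hM0, hMmem, hMmax⟩ := zorn_subset_nonempty S hchain _ hS0
    -- M is total
    have htotal : ∀ x₀ : H, ∃ q₀ : H, (x₀, q₀) ∈ M := by
      intro x₀
      obtain ⟨q₀, hq₀⟩ := one_point hβ (fun m : M => (m : H × H).1) (fun m : M => (m : H × H).2)
        (fun m₁ m₂ => hMmem.2 _ m₁.2 _ m₂.2) x₀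
      refine ⟨q₀, ?_⟩
      have hM' : M ∪ {(x₀, q₀)} ∈ S := by
        constructor
        · exact fun i => Or.inl (hMmem.1 i)
        · rintro p₁ (hp₁ | hp₁) p₂ (hp₂ | hp₂)
          · exact hMmem.2 p₁ hp₁ p₂ hp₂
          · rw [Set.mem_singleton_iff] at hp₂; subst hp₂
            have := hq₀ ⟨p₁, hp₁⟩
            have hswap : ⟪p₁.1 - x₀, p₁.2 - q₀⟫ = ⟪x₀ - p₁.1, q₀ - p₁.2⟫ := by
              rw [← neg_sub x₀ p₁.1, ← neg_sub q₀ p₁.2, inner_neg_neg]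
            rw [hswap]
            rw [show ‖p₁.2 - q₀‖ = ‖q₀ - p₁.2‖ from norm_sub_rev _ _]
            exact this
          · rw [Set.mem_singleton_iff] at hp₁; subst hp₁
            exact hq₀ ⟨p₂, hp₂⟩
          · rw [Set.mem_singleton_iff] at hp₁ hp₂; subst hp₁; subst hp₂
            simp [hβ.le]
      exact hMmax hM' Set.subset_union_left (Or.inr rfl)
    -- M is functional
    have hfun : ∀ x₀ q₁ q₂ : H, (x₀, q₁) ∈ M → (x₀, q₂) ∈ M → q₁ = q₂ := by
      intro x₀ q₁ q₂ h1 h2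
      have := hMmem.2 _ h1 _ h2
      simp only [sub_self, inner_zero_left] at this
      have : ‖q₁ - q₂‖^2 ≤ 0 := by nlinarith [this, hβ]
      have h3 : ‖q₁ - q₂‖ = 0 := by nlinarith [norm_nonneg (q₁ - q₂)]
      rw [norm_eq_zero, sub_eq_zero] at h3
      exact h3
    choose Q hQ using htotal
    refine ⟨Q, ?_, ?_⟩
    · intro u v
      have := hMmem.2 _ (hQ u) _ (hQ v)
      simp only at this
      rwa [real_inner_comm]
    · intro i
      exact hfun (x i) (Q (x i)) (q i) (hQ (x i)) (hMmem.1 i)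
end

section
/- Let L ∈ (0,∞). Consider the three duplets in ℝ² × ℝ²: (x₁,q₁) = ((0,0),(0,0)), (x₂,q₂) = ((1,0),(0,0)), (x₃,q₃) = ((1/2,0),(0,L/2)). These satisfy ⟨x_i − x_j, q_i − q_j⟩ ≥ 0 and ‖q_i − q_j‖² ≤ L²‖x_i − x_j‖² for all i, j ∈ {1,2,3}, and yet there is no map Q : ℝ² → ℝ² that is monotone and L-Lipschitz with Q x₁ = q₁, Q x₂ = q₂ and Q x₃ = q₃. -/
open RealInnerProductSpace

/-- Failure of interpolation with the intersection `M ∩ L_L` (monotone and `L`-Lipschitz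
maps): the three duplets `((0,0),(0,0))`, `((1,0),(0,0))`, `((1/2,0),(0,L/2))` in `ℝ²`
satisfy the monotonicity and Lipschitz interpolation inequalities pairwise, yet no monotone
`L`-Lipschitz map interpolates them. -/
theorem monotone_lipschitz_interpolation_failure
    {L : ℝ} (hL : 0 < L)
    (x q : Fin 3 → EuclideanSpace ℝ (Fin 2))
    (hx : x = ![(WithLp.equiv 2 (Fin 2 → ℝ)).symm ![0, 0],
                (WithLp.equiv 2 (Fin 2 → ℝ)).symm ![1, 0],
                (WithLp.equiv 2 (Fin 2 → ℝ)).symm ![1/2, 0]])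
    (hq : q = ![(WithLp.equiv 2 (Fin 2 → ℝ)).symm ![0, 0],
                (WithLp.equiv 2 (Fin 2 → ℝ)).symm ![0, 0],
                (WithLp.equiv 2 (Fin 2 → ℝ)).symm ![0, L/2]]) :
    (∀ i j, ⟪x i - x j, q i - q j⟫ ≥ 0) ∧
    (∀ i j, ‖q i - q j‖ ^ 2 ≤ L ^ 2 * ‖x i - x j‖ ^ 2) ∧
    ¬ ∃ Q : EuclideanSpace ℝ (Fin 2) → EuclideanSpace ℝ (Fin 2),
        (∀ a b, ⟪Q a - Q b, a - b⟫ ≥ 0) ∧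
        (∀ a b, ‖Q a - Q b‖ ≤ L * ‖a - b‖) ∧
        (∀ i, Q (x i) = q i) := by
  subst hx hq
  refine ⟨?_, ?_, ?_⟩
  · intro i j
    fin_cases i <;> fin_cases j <;>
      simp [PiLp.inner_apply, Fin.sum_univ_two]
  · intro i j
    have key : ∀ a b : EuclideanSpace ℝ (Fin 2), ‖a - b‖ ^ 2
        = ((a 0 - b 0) ^ 2 + (a 1 - b 1) ^ 2) := by
      intro a b
      rw [EuclideanSpace.real_norm_sq_eq]
      simp [PiLp.inner_apply, Fin.sum_univ_two]
    fin_cases i <;> fin_cases j <;> simp only [key] <;> simp <;> nlinarith [hL]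
  · rintro ⟨Q, hmono, hlip, hint⟩
    set p : EuclideanSpace ℝ (Fin 2) := (WithLp.equiv 2 (Fin 2 → ℝ)).symm ![1/2, -1/4]
    have h0 := hint 0
    have h1 := hint 1
    have h2 := hint 2
    simp only [Matrix.cons_val_zero, Matrix.cons_val_one, Matrix.head_cons,
      Matrix.cons_val_two, Matrix.tail_cons] at h0 h1 h2
    -- monotonicity
    have m0 := hmono p ((WithLp.equiv 2 (Fin 2 → ℝ)).symm ![0, 0])
    have m1 := hmono p ((WithLp.equiv 2 (Fin 2 → ℝ)).symm ![1, 0])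
    rw [h0] at m0
    rw [h1] at m1
    simp only [PiLp.inner_apply, Fin.sum_univ_two, Pi.sub_apply, RCLike.inner_apply,
      conj_trivial, Pi.sub_apply, WithLp.equiv_symm_apply, PiLp.toLp_apply, Matrix.cons_val_zero,
      Matrix.cons_val_one, Matrix.head_cons, PiLp.sub_apply] at m0 m1
    have hp0 : p 0 = 1/2 := by simp [p]
    have hp1 : p 1 = -(1/4) := by norm_num [p]
    rw [hp0, hp1] at m0 m1
    -- Lipschitz from x 2
    have lp := hlip p ((WithLp.equiv 2 (Fin 2 → ℝ)).symm ![1/2, 0])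
    rw [h2] at lp
    have hpnorm : ‖p - (WithLp.equiv 2 (Fin 2 → ℝ)).symm ![1/2, 0]‖ = 1/4 := by
      have : ‖p - (WithLp.equiv 2 (Fin 2 → ℝ)).symm ![1/2, 0]‖ ^ 2 = (1/4 : ℝ) ^ 2 := by
        rw [EuclideanSpace.real_norm_sq_eq]
        simp [p, PiLp.inner_apply, Fin.sum_univ_two]
        norm_num
      nlinarith [norm_nonneg (p - (WithLp.equiv 2 (Fin 2 → ℝ)).symm ![1/2, 0])]
    rw [hpnorm] at lp
    have hsq : (Q p 1 - L/2) ^ 2 ≤ ‖Q p - (WithLp.equiv 2 (Fin 2 → ℝ)).symm ![0, L/2]‖ ^ 2 := by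
      rw [EuclideanSpace.real_norm_sq_eq]
      simp [PiLp.inner_apply, Fin.sum_univ_two]
      nlinarith [sq_nonneg (Q p 0)]
    have hle : ‖Q p - (WithLp.equiv 2 (Fin 2 → ℝ)).symm ![0, L/2]‖ ^ 2 ≤ (L * (1/4)) ^ 2 := by
      apply pow_le_pow_left₀ (norm_nonneg _) lp
    nlinarith [sq_nonneg (Q p 1 - L/2)]
end

section
/- Let H be a real Hilbert space and let μ, β, L ∈ (0,∞) satisfy μ ≤ L and μ·β ≤ 1. Let (x₁,q₁), (x₂,q₂) ∈ H × H. Then there exists a map Q : H → H that is μ-strongly monotone, β-cocoercive and L-Lipschitz with Q x₁ = q₁ and Q x₂ = q₂ if and only if the three inequalities hold: ⟨x₁ − x₂, q₁ − q₂⟩ ≥ μ‖x₁ − x₂‖², ⟨x₁ − x₂, q₁ − q₂⟩ ≥ β‖q₁ − q₂‖², and ‖q₁ − q₂‖² ≤ L²‖x₁ − x₂‖². -/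
open RealInnerProductSpace

section aux
variable {H : Type*} [NormedAddCommGroup H] [InnerProductSpace ℝ H]

lemma aux_inner (d w v : H) (a c : ℝ) :
    ⟪a • v + c • (⟪d, v⟫ • w - ⟪w, v⟫ • d), v⟫ = a * ‖v‖ ^ 2 := by
  simp only [inner_add_left, inner_sub_left, real_inner_smul_left,
    real_inner_self_eq_norm_sq, real_inner_comm w v]
  ring

lemma aux_norm (d w v : H) (a c : ℝ) (hdw : ⟪d, w⟫ = 0) :
    ‖a • v + c • (⟪d, v⟫ • w - ⟪w, v⟫ • d)‖ ^ 2 =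
      a ^ 2 * ‖v‖ ^ 2 + c ^ 2 * (⟪d, v⟫ ^ 2 * ‖w‖ ^ 2 + ⟪w, v⟫ ^ 2 * ‖d‖ ^ 2) := by
  have hwd : ⟪w, d⟫ = 0 := by rw [real_inner_comm]; exact hdw
  rw [← real_inner_self_eq_norm_sq]
  simp only [inner_add_left, inner_add_right, inner_sub_left, inner_sub_right,
    real_inner_smul_left, real_inner_smul_right, hdw, hwd,
    real_inner_comm v d, real_inner_comm v w, mul_zero, zero_mul, sub_zero, zero_sub]
  simp only [real_inner_self_eq_norm_sq]
  ring

lemma aux_bessel (d w v : H) (hdw : ⟪d, w⟫ = 0) :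
    ⟪d, v⟫ ^ 2 * ‖w‖ ^ 2 + ⟪w, v⟫ ^ 2 * ‖d‖ ^ 2 ≤ ‖d‖ ^ 2 * ‖w‖ ^ 2 * ‖v‖ ^ 2 := by
  rcases eq_or_ne d 0 with rfl | hd
  · simp
  rcases eq_or_ne w 0 with rfl | hw
  · simp
  have hD : (0:ℝ) < ‖d‖ ^ 2 := pow_pos (norm_pos_iff.mpr hd) 2
  have hW : (0:ℝ) < ‖w‖ ^ 2 := pow_pos (norm_pos_iff.mpr hw) 2
  have hwd : ⟪w, d⟫ = 0 := by rw [real_inner_comm]; exact hdw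
  have key : (0:ℝ) ≤ ‖(‖d‖^2*‖w‖^2) • v - (‖w‖^2 * ⟪d,v⟫) • d - (‖d‖^2 * ⟪w,v⟫) • w‖ ^ 2 :=
    sq_nonneg _
  rw [← real_inner_self_eq_norm_sq] at key
  simp only [inner_sub_left, inner_sub_right, real_inner_smul_left, real_inner_smul_right,
    hdw, hwd, mul_zero, zero_mul, sub_zero, zero_sub] at key
  simp only [real_inner_self_eq_norm_sq] at key
  rw [real_inner_comm v d, real_inner_comm v w] at key
  rw [real_inner_comm v d, real_inner_comm v w]
  nlinarith [key, mul_pos hD hW, hD, hW]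

end aux

set_option maxHeartbeats 1000000 in
/-- Two-point interpolation with `M_μ ∩ C_β ∩ L_L`:
`{(x₁,q₁),(x₂,q₂)}` is interpolable by a `μ`-strongly monotone, `β`-cocoercive and
`L`-Lipschitz map iff the three corresponding inequalities hold. -/
theorem two_point_interpolation_MCL
    {H : Type*} [NormedAddCommGroup H] [InnerProductSpace ℝ H] [CompleteSpace H]
    {μ β L : ℝ} (hμ : 0 < μ) (hβ : 0 < β) (hL : 0 < L) (hμL : μ ≤ L) (hμβ : μ * β ≤ 1)
    (x₁ q₁ x₂ q₂ : H) :
    (∃ Q : H → H,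
        (∀ a b : H, ⟪Q a - Q b, a - b⟫ ≥ μ * ‖a - b‖ ^ 2) ∧
        (∀ a b : H, ⟪Q a - Q b, a - b⟫ ≥ β * ‖Q a - Q b‖ ^ 2) ∧
        (∀ a b : H, ‖Q a - Q b‖ ≤ L * ‖a - b‖) ∧
        Q x₁ = q₁ ∧ Q x₂ = q₂) ↔
      (⟪x₁ - x₂, q₁ - q₂⟫ ≥ μ * ‖x₁ - x₂‖ ^ 2 ∧
       ⟪x₁ - x₂, q₁ - q₂⟫ ≥ β * ‖q₁ - q₂‖ ^ 2 ∧
       ‖q₁ - q₂‖ ^ 2 ≤ L ^ 2 * ‖x₁ - x₂‖ ^ 2) := by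
  constructor
  · rintro ⟨Q, hm, hc, hl, hQ1, hQ2⟩
    refine ⟨?_, ?_, ?_⟩
    · have := hm x₁ x₂; rw [hQ1, hQ2] at this; rwa [real_inner_comm]
    · have := hc x₁ x₂; rw [hQ1, hQ2] at this; rwa [real_inner_comm]
    · have := hl x₁ x₂; rw [hQ1, hQ2] at this
      nlinarith [norm_nonneg (q₁ - q₂), norm_nonneg (x₁ - x₂), hL.le,
        mul_nonneg hL.le (norm_nonneg (x₁ - x₂))]
  · rintro ⟨h1, h2, h3⟩
    by_cases hx : x₁ = x₂
    · -- degenerate case: x₁ = x₂ forces q₁ = q₂; use Q x = μ • x + (q₁ - μ • x₁)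
      have hq : q₁ = q₂ := by
        subst hx
        have h3' : ‖q₁ - q₂‖ ^ 2 ≤ 0 := by simpa using h3
        have : ‖q₁ - q₂‖ = 0 := by nlinarith [norm_nonneg (q₁ - q₂)]
        rwa [norm_sub_eq_zero_iff] at this
      refine ⟨fun x => μ • x + (q₁ - μ • x₁), ?_, ?_, ?_, ?_, ?_⟩
      · intro p q
        have hpq : (μ • p + (q₁ - μ • x₁)) - (μ • q + (q₁ - μ • x₁)) = μ • (p - q) := by
          module
        show ⟪(μ • p + (q₁ - μ • x₁)) - (μ • q + (q₁ - μ • x₁)), p - q⟫ ≥ μ * ‖p - q‖ ^ 2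
        rw [hpq, real_inner_smul_left, real_inner_self_eq_norm_sq]
      · intro p q
        have hpq : (μ • p + (q₁ - μ • x₁)) - (μ • q + (q₁ - μ • x₁)) = μ • (p - q) := by
          module
        show ⟪(μ • p + (q₁ - μ • x₁)) - (μ • q + (q₁ - μ • x₁)), p - q⟫ ≥
          β * ‖(μ • p + (q₁ - μ • x₁)) - (μ • q + (q₁ - μ • x₁))‖ ^ 2
        rw [hpq, real_inner_smul_left, real_inner_self_eq_norm_sq, norm_smul]
        simp only [Real.norm_eq_abs, abs_of_pos hμ]
        nlinarith [sq_nonneg ‖p - q‖, hμ, hβ, hμβ]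
      · intro p q
        have hpq : (μ • p + (q₁ - μ • x₁)) - (μ • q + (q₁ - μ • x₁)) = μ • (p - q) := by
          module
        show ‖(μ • p + (q₁ - μ • x₁)) - (μ • q + (q₁ - μ • x₁))‖ ≤ L * ‖p - q‖
        rw [hpq, norm_smul]
        simp only [Real.norm_eq_abs, abs_of_pos hμ]
        exact mul_le_mul_of_nonneg_right hμL (norm_nonneg _)
      · show μ • x₁ + (q₁ - μ • x₁) = q₁; abel
      · show μ • x₂ + (q₁ - μ • x₁) = q₂; rw [← hx, hq]; abel
    · -- main case
      set d := x₁ - x₂ with hd_def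
      set e := q₁ - q₂ with he_def
      have hd0 : d ≠ 0 := sub_ne_zero.mpr hx
      have hD : (0:ℝ) < ‖d‖ ^ 2 := pow_pos (norm_pos_iff.mpr hd0) 2
      set a : ℝ := ⟪d, e⟫ / ‖d‖ ^ 2 with ha_def
      have hade : ⟪d, e⟫ = a * ‖d‖ ^ 2 := by rw [ha_def, div_mul_cancel₀ _ hD.ne']
      set w : H := e - a • d with hw_def
      have hdw : ⟪d, w⟫ = 0 := by
        rw [hw_def, inner_sub_right, real_inner_smul_right, real_inner_self_eq_norm_sq, hade]
        ring
      have hwd : ⟪w, d⟫ = 0 := by rw [real_inner_comm]; exact hdw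
      have he : e = a • d + w := by rw [hw_def]; abel
      have hE : ‖e‖ ^ 2 = a ^ 2 * ‖d‖ ^ 2 + ‖w‖ ^ 2 := by
        rw [he, norm_add_sq_real, real_inner_smul_left, hdw, norm_smul]
        simp [Real.norm_eq_abs, mul_pow, sq_abs]
      -- scalar inequalities
      have ha_mu : μ ≤ a := by
        rw [hade] at h1; nlinarith [h1, hD]
      have hco : β * (a ^ 2 * ‖d‖ ^ 2 + ‖w‖ ^ 2) ≤ a * ‖d‖ ^ 2 := by
        rw [hade, hE] at h2; linarith [h2]
      have hLsq : a ^ 2 * ‖d‖ ^ 2 + ‖w‖ ^ 2 ≤ L ^ 2 * ‖d‖ ^ 2 := by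
        rw [hE] at h3; linarith [h3]
      set c : ℝ := (‖d‖ ^ 2)⁻¹ with hc_def
      have hcD : c * ‖d‖ ^ 2 = 1 := inv_mul_cancel₀ hD.ne'
      have hc_pos : 0 < c := by rw [hc_def]; exact inv_pos.mpr hD
      -- division-free scalar consequences
      have hco' : β * (a ^ 2 + c * ‖w‖ ^ 2) ≤ a := by
        rw [← sub_nonneg]
        have hrw : a - β * (a ^ 2 + c * ‖w‖ ^ 2)
            = (a * ‖d‖ ^ 2 - β * (a ^ 2 * ‖d‖ ^ 2 + ‖w‖ ^ 2)) / ‖d‖ ^ 2 := by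
          rw [hc_def]; field_simp
        rw [hrw]
        exact div_nonneg (by linarith) hD.le
      have hL' : a ^ 2 + c * ‖w‖ ^ 2 ≤ L ^ 2 := by
        rw [← sub_nonneg]
        have hrw : L ^ 2 - (a ^ 2 + c * ‖w‖ ^ 2)
            = (L ^ 2 * ‖d‖ ^ 2 - (a ^ 2 * ‖d‖ ^ 2 + ‖w‖ ^ 2)) / ‖d‖ ^ 2 := by
          rw [hc_def]; field_simp
        rw [hrw]
        exact div_nonneg (by linarith) hD.le
      have key : ∀ p q : H,
          (a • (p - x₂) + c • (⟪d, p - x₂⟫ • w - ⟪w, p - x₂⟫ • d) + q₂)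
            - (a • (q - x₂) + c • (⟪d, q - x₂⟫ • w - ⟪w, q - x₂⟫ • d) + q₂)
            = a • (p - q) + c • (⟪d, p - q⟫ • w - ⟪w, p - q⟫ • d) := by
        intro p q
        simp only [inner_sub_right]
        module
      have hb3 : ∀ v : H, c ^ 2 * (⟪d, v⟫ ^ 2 * ‖w‖ ^ 2 + ⟪w, v⟫ ^ 2 * ‖d‖ ^ 2)
          ≤ c * (‖w‖ ^ 2 * ‖v‖ ^ 2) := by
        intro v
        have hb := aux_bessel d w v hdw
        calc c ^ 2 * (⟪d, v⟫ ^ 2 * ‖w‖ ^ 2 + ⟪w, v⟫ ^ 2 * ‖d‖ ^ 2)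
            ≤ c ^ 2 * (‖d‖ ^ 2 * ‖w‖ ^ 2 * ‖v‖ ^ 2) :=
              mul_le_mul_of_nonneg_left hb (sq_nonneg c)
          _ = (c * ‖d‖ ^ 2) * (c * (‖w‖ ^ 2 * ‖v‖ ^ 2)) := by ring
          _ = c * (‖w‖ ^ 2 * ‖v‖ ^ 2) := by rw [hcD, one_mul]
      clear_value c w a e d
      refine ⟨fun x => a • (x - x₂) + c • (⟪d, x - x₂⟫ • w - ⟪w, x - x₂⟫ • d) + q₂,
        ?_, ?_, ?_, ?_, ?_⟩
      · -- strong monotonicity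
        intro p q
        show ⟪_ - _, p - q⟫ ≥ μ * ‖p - q‖ ^ 2
        rw [key p q, aux_inner]
        exact mul_le_mul_of_nonneg_right ha_mu (sq_nonneg _)
      · -- cocoercivity
        intro p q
        show ⟪_ - _, p - q⟫ ≥ β * ‖_ - _‖ ^ 2
        rw [key p q, aux_inner, aux_norm d w (p - q) a c hdw]
        nlinarith [mul_le_mul_of_nonneg_left (hb3 (p - q)) hβ.le,
          mul_le_mul_of_nonneg_right hco' (sq_nonneg ‖p - q‖)]
      · -- Lipschitz
        intro p q
        show ‖_ - _‖ ≤ L * ‖p - q‖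
        rw [key p q]
        have hn := aux_norm d w (p - q) a c hdw
        have hsq : ‖a • (p - q) + c • (⟪d, p - q⟫ • w - ⟪w, p - q⟫ • d)‖ ^ 2
            ≤ (L * ‖p - q‖) ^ 2 := by
          rw [hn]
          nlinarith [hb3 (p - q), mul_le_mul_of_nonneg_right hL' (sq_nonneg ‖p - q‖)]
        have h0 : (0:ℝ) ≤ L * ‖p - q‖ := mul_nonneg hL.le (norm_nonneg _)
        nlinarith [hsq, h0, norm_nonneg (a • (p - q) + c • (⟪d, p - q⟫ • w - ⟪w, p - q⟫ • d))]
      · -- Q x₁ = q₁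
        show a • (x₁ - x₂) + c • (⟪d, x₁ - x₂⟫ • w - ⟪w, x₁ - x₂⟫ • d) + q₂ = q₁
        rw [← hd_def, real_inner_self_eq_norm_sq, hwd, zero_smul, sub_zero, smul_smul, hcD,
          one_smul]
        have hadw : a • d + w = e := he.symm
        rw [hadw, he_def]
        abel
      · -- Q x₂ = q₂
        show a • (x₂ - x₂) + c • (⟪d, x₂ - x₂⟫ • w - ⟪w, x₂ - x₂⟫ • d) + q₂ = q₂
        simp
end

section
/- Let H be a real Hilbert space and let β, L ∈ (0,∞). Let (x₁,q₁), (x₂,q₂) ∈ H × H. Then there exists a map Q : H → H that is β-cocoercive and L-Lipschitz with Q x₁ = q₁ and Q x₂ = q₂ if and only if ⟨x₁ − x₂, q₁ − q₂⟩ ≥ β‖q₁ − q₂‖² and ‖q₁ − q₂‖² ≤ L²‖x₁ − x₂‖². -/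
open RealInnerProductSpace

/-- Two-point interpolation with `C_β ∩ L_L`: `{(x₁,q₁),(x₂,q₂)}` is interpolable by a
`β`-cocoercive and `L`-Lipschitz map iff the two corresponding inequalities hold. -/
theorem two_point_interpolation_CL
    {H : Type*} [NormedAddCommGroup H] [InnerProductSpace ℝ H] [CompleteSpace H]
    {β L : ℝ} (hβ : 0 < β) (hL : 0 < L)
    (x₁ q₁ x₂ q₂ : H) :
    (∃ Q : H → H,
        (∀ a b : H, ⟪Q a - Q b, a - b⟫ ≥ β * ‖Q a - Q b‖ ^ 2) ∧
        (∀ a b : H, ‖Q a - Q b‖ ≤ L * ‖a - b‖) ∧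
        Q x₁ = q₁ ∧ Q x₂ = q₂) ↔
      (⟪x₁ - x₂, q₁ - q₂⟫ ≥ β * ‖q₁ - q₂‖ ^ 2 ∧
       ‖q₁ - q₂‖ ^ 2 ≤ L ^ 2 * ‖x₁ - x₂‖ ^ 2) := by
  constructor
  · rintro ⟨Q, hco, hlip, hQ1, hQ2⟩
    constructor
    · have := hco x₁ x₂
      rw [hQ1, hQ2] at this
      rwa [real_inner_comm]
    · have := hlip x₁ x₂
      rw [hQ1, hQ2] at this
      nlinarith [norm_nonneg (q₁ - q₂), norm_nonneg (x₁ - x₂), hL.le]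
  · rintro ⟨h1, h2⟩
    by_cases hx : x₁ = x₂
    · have hq : q₁ = q₂ := by
        subst hx
        have : ‖q₁ - q₂‖ ^ 2 ≤ 0 := by simpa using h2
        have : ‖q₁ - q₂‖ = 0 := by nlinarith [norm_nonneg (q₁ - q₂)]
        rwa [norm_sub_eq_zero_iff] at this
      refine ⟨fun _ => q₁, ?_, ?_, rfl, hq⟩
      · intro a b; simp
      · intro a b; simp [mul_nonneg hL.le (norm_nonneg _)]
    · set v := x₁ - x₂ with hv
      set D := q₁ - q₂ with hD
      have hvne : v ≠ 0 := sub_ne_zero.mpr hx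
      set ρ : ℝ := ‖v‖ ^ 2 with hρdef
      have hρ : 0 < ρ := pow_pos (norm_pos_iff.mpr hvne) 2
      set α : ℝ := ⟪v, D⟫ / ρ with hα
      set w : H := D - α • v with hw
      have hvv : ⟪v, v⟫ = ρ := real_inner_self_eq_norm_sq v
      have hvw : ⟪v, w⟫ = 0 := by
        rw [hw, inner_sub_right, real_inner_smul_right, hvv, hα]
        field_simp
        ring
      have hwv : ⟪w, v⟫ = 0 := by rw [real_inner_comm]; exact hvw
      have hDdecomp : D = α • v + w := by rw [hw]; abel
      have hDnorm : ‖D‖ ^ 2 = α ^ 2 * ρ + ‖w‖ ^ 2 := by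
        have : ‖D‖ ^ 2 = ⟪D, D⟫ := (real_inner_self_eq_norm_sq D).symm
        rw [this, hDdecomp]
        simp only [inner_add_left, inner_add_right, real_inner_smul_left,
          real_inner_smul_right, hvv, hvw, hwv]
        rw [real_inner_self_eq_norm_sq w]
        ring
      -- the linear part
      set A : H → H := fun u => α • u + (⟪u, v⟫ / ρ) • w - (⟪u, w⟫ / ρ) • v with hA
      set Q : H → H := fun x => q₂ + A (x - x₂) with hQ
      clear_value v D ρ α w A Q
      have hQsub : ∀ a b : H, Q a - Q b = A (a - b) := by
        intro a b
        simp only [hQ, hA]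
        have e1 : ⟪a - x₂, v⟫ = ⟪a - b, v⟫ + ⟪b - x₂, v⟫ := by
          rw [← inner_add_left]; congr 1; abel
        have e2 : ⟪a - x₂, w⟫ = ⟪a - b, w⟫ + ⟪b - x₂, w⟫ := by
          rw [← inner_add_left]; congr 1; abel
        rw [e1, e2, add_div, add_div, add_smul, add_smul]
        module
      -- inner product identity
      have key1 : ∀ u : H, ⟪A u, u⟫ = α * ‖u‖ ^ 2 := by
        intro u
        simp only [hA, inner_sub_left, inner_add_left, real_inner_smul_left]
        rw [real_inner_self_eq_norm_sq u, real_inner_comm w u, real_inner_comm v u]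
        ring
      -- norm identity
      have key2 : ∀ u : H, ‖A u‖ ^ 2 =
          α ^ 2 * ‖u‖ ^ 2 + (⟪u, v⟫ ^ 2 * ‖w‖ ^ 2 + ⟪u, w⟫ ^ 2 * ρ) / ρ ^ 2 := by
        intro u
        rw [← real_inner_self_eq_norm_sq (A u)]
        simp only [hA, inner_sub_left, inner_add_left, inner_sub_right, inner_add_right,
          real_inner_smul_left, real_inner_smul_right, hvv, hvw, hwv]
        rw [real_inner_self_eq_norm_sq u, real_inner_self_eq_norm_sq w,
          real_inner_comm w u, real_inner_comm v u]
        field_simp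
        ring
      -- Bessel-type bound
      have proj : ∀ u : H, ⟪u, w⟫ ^ 2 * ρ ≤ (ρ * ‖u‖ ^ 2 - ⟪u, v⟫ ^ 2) * ‖w‖ ^ 2 := by
        intro u
        set t : ℝ := ⟪u, v⟫ / ρ with ht
        clear_value t
        have huw : ⟪u - t • v, w⟫ = ⟪u, w⟫ := by
          rw [inner_sub_left, real_inner_smul_left, hvw]; ring
        have hcs : ⟪u - t • v, w⟫ ^ 2 ≤ ‖u - t • v‖ ^ 2 * ‖w‖ ^ 2 := by
          have := abs_real_inner_le_norm (u - t • v) w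
          nlinarith [abs_nonneg (⟪u - t • v, w⟫), sq_abs (⟪u - t • v, w⟫),
            norm_nonneg (u - t • v), norm_nonneg w]
        have hnorm : ‖u - t • v‖ ^ 2 = ‖u‖ ^ 2 - ⟪u, v⟫ ^ 2 / ρ := by
          rw [← real_inner_self_eq_norm_sq]
          simp only [inner_sub_left, inner_sub_right, real_inner_smul_left,
            real_inner_smul_right, hvv]
          rw [real_inner_self_eq_norm_sq u, ht]
          field_simp
          rw [real_inner_comm u v]
          ring
        rw [huw] at hcs
        have hnorm' : ρ * ‖u - t • v‖ ^ 2 = ρ * ‖u‖ ^ 2 - ⟪u, v⟫ ^ 2 := by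
          rw [hnorm, mul_sub, mul_div_cancel₀ _ hρ.ne']
        calc ⟪u, w⟫ ^ 2 * ρ = ρ * ⟪u, w⟫ ^ 2 := mul_comm _ _
          _ ≤ ρ * (‖u - t • v‖ ^ 2 * ‖w‖ ^ 2) := mul_le_mul_of_nonneg_left hcs hρ.le
          _ = ρ * ‖u - t • v‖ ^ 2 * ‖w‖ ^ 2 := (mul_assoc _ _ _).symm
          _ = (ρ * ‖u‖ ^ 2 - ⟪u, v⟫ ^ 2) * ‖w‖ ^ 2 := by rw [hnorm']
      -- norm upper bound
      have key3 : ∀ u : H, ‖A u‖ ^ 2 ≤ (‖D‖ ^ 2 / ρ) * ‖u‖ ^ 2 := by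
        intro u
        rw [key2, hDnorm]
        have hp := proj u
        have : (⟪u, v⟫ ^ 2 * ‖w‖ ^ 2 + ⟪u, w⟫ ^ 2 * ρ) / ρ ^ 2 ≤ (‖w‖ ^ 2 / ρ) * ‖u‖ ^ 2 := by
          rw [div_le_iff₀ (pow_pos hρ 2)]
          have hR : ‖w‖ ^ 2 / ρ * ‖u‖ ^ 2 * ρ ^ 2 = ρ * ‖u‖ ^ 2 * ‖w‖ ^ 2 := by
            field_simp
          have hE : (ρ * ‖u‖ ^ 2 - ⟪u, v⟫ ^ 2) * ‖w‖ ^ 2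
              = ρ * ‖u‖ ^ 2 * ‖w‖ ^ 2 - ⟪u, v⟫ ^ 2 * ‖w‖ ^ 2 := by ring
          linarith [hp, hR, hE]
        have heq : ((α ^ 2 * ρ + ‖w‖ ^ 2) / ρ) * ‖u‖ ^ 2
            = α ^ 2 * ‖u‖ ^ 2 + (‖w‖ ^ 2 / ρ) * ‖u‖ ^ 2 := by
          field_simp
        linarith [heq ▸ le_refl (((α ^ 2 * ρ + ‖w‖ ^ 2) / ρ) * ‖u‖ ^ 2), this]
      refine ⟨Q, ?_, ?_, ?_, ?_⟩
      · intro a b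
        rw [hQsub, key1]
        have h3 := key3 (a - b)
        have hβD : β * ‖D‖ ^ 2 ≤ α * ρ := by
          rw [hα]; field_simp; exact h1
        have hub : β * ‖A (a - b)‖ ^ 2 ≤ β * ((‖D‖ ^ 2 / ρ) * ‖a - b‖ ^ 2) :=
          mul_le_mul_of_nonneg_left h3 hβ.le
        have : β * ((‖D‖ ^ 2 / ρ) * ‖a - b‖ ^ 2) ≤ α * ‖a - b‖ ^ 2 := by
          rw [div_mul_eq_mul_div, mul_div_assoc', div_le_iff₀ hρ]
          have := mul_le_mul_of_nonneg_right hβD (sq_nonneg ‖a - b‖)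
          linarith
        linarith
      · intro a b
        rw [hQsub]
        have h3 := key3 (a - b)
        have hDL : ‖D‖ ^ 2 / ρ ≤ L ^ 2 := by
          rw [div_le_iff₀ hρ]; linarith [h2]
        have : ‖A (a - b)‖ ^ 2 ≤ (L * ‖a - b‖) ^ 2 := by
          calc ‖A (a - b)‖ ^ 2 ≤ (‖D‖ ^ 2 / ρ) * ‖a - b‖ ^ 2 := h3
            _ ≤ L ^ 2 * ‖a - b‖ ^ 2 := mul_le_mul_of_nonneg_right hDL (sq_nonneg _)
            _ = (L * ‖a - b‖) ^ 2 := by ring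
        exact (pow_le_pow_iff_left₀ (norm_nonneg _)
          (mul_nonneg hL.le (norm_nonneg _)) two_ne_zero).mp this
      · show Q x₁ = q₁
        rw [hQ, hA]
        simp only [← hv, hvv]
        rw [hvw]
        rw [div_self hρ.ne', zero_div, one_smul, zero_smul, sub_zero]
        rw [hw, hD]
        abel
      · show Q x₂ = q₂
        rw [hQ]
        simp [hA]
end

section
/- Let H be a real Hilbert space and let μ, β ∈ (0,∞) satisfy μ·β ≤ 1. Let (x₁,q₁), (x₂,q₂) ∈ H × H. Then there exists a map Q : H → H that is μ-strongly monotone and β-cocoercive with Q x₁ = q₁ and Q x₂ = q₂ if and only if ⟨x₁ − x₂, q₁ − q₂⟩ ≥ μ‖x₁ − x₂‖² and ⟨x₁ − x₂, q₁ − q₂⟩ ≥ β‖q₁ − q₂‖². -/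
set_option maxHeartbeats 1000000

open RealInnerProductSpace

/-- Bessel's inequality for two orthogonal vectors, in cleared-denominator form. -/
lemma bessel_two {H : Type*} [NormedAddCommGroup H] [InnerProductSpace ℝ H]
    (u z v : H) (ho : ⟪u, z⟫ = 0) :
    ⟪u, v⟫ ^ 2 * ‖z‖ ^ 2 + ⟪z, v⟫ ^ 2 * ‖u‖ ^ 2 ≤ ‖u‖ ^ 2 * ‖z‖ ^ 2 * ‖v‖ ^ 2 := by
  by_cases hu : u = 0
  · simp [hu]
  by_cases hz : z = 0
  · simp [hz]
  set n : ℝ := ‖u‖ ^ 2 with hn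
  set m : ℝ := ‖z‖ ^ 2 with hm
  have hn0 : 0 < n := hn ▸ pow_pos (norm_pos_iff.mpr hu) 2
  have hm0 : 0 < m := hm ▸ pow_pos (norm_pos_iff.mpr hz) 2
  have h0 : (0:ℝ) ≤ ⟪(n*m) • v - (m*⟪u,v⟫) • u - (n*⟪z,v⟫) • z,
      (n*m) • v - (m*⟪u,v⟫) • u - (n*⟪z,v⟫) • z⟫ := real_inner_self_nonneg
  have hu2 : ⟪u, u⟫ = n := real_inner_self_eq_norm_sq u
  have hz2 : ⟪z, z⟫ = m := real_inner_self_eq_norm_sq z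
  have hv2 : ⟪v, v⟫ = ‖v‖ ^ 2 := real_inner_self_eq_norm_sq v
  have hzu : ⟪z, u⟫ = 0 := by rw [real_inner_comm]; exact ho
  have hvu : ⟪v, u⟫ = ⟪u, v⟫ := real_inner_comm u v
  have hvz : ⟪v, z⟫ = ⟪z, v⟫ := real_inner_comm z v
  simp only [inner_sub_left, inner_sub_right, real_inner_smul_left, real_inner_smul_right,
    hu2, hz2, hv2, ho, hzu, hvu, hvz] at h0
  nlinarith [sq_nonneg ⟪u,v⟫, sq_nonneg ⟪z,v⟫, mul_pos hn0 hm0]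

/-- Two-point interpolation with `M_μ ∩ C_β`: `{(x₁,q₁),(x₂,q₂)}` is interpolable by a
`μ`-strongly monotone and `β`-cocoercive map iff the two corresponding inequalities hold. -/
theorem two_point_interpolation_MC
    {H : Type*} [NormedAddCommGroup H] [InnerProductSpace ℝ H] [CompleteSpace H]
    {μ β : ℝ} (hμ : 0 < μ) (hβ : 0 < β) (hμβ : μ * β ≤ 1)
    (x₁ q₁ x₂ q₂ : H) :
    (∃ Q : H → H,
        (∀ a b : H, ⟪Q a - Q b, a - b⟫ ≥ μ * ‖a - b‖ ^ 2) ∧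
        (∀ a b : H, ⟪Q a - Q b, a - b⟫ ≥ β * ‖Q a - Q b‖ ^ 2) ∧
        Q x₁ = q₁ ∧ Q x₂ = q₂) ↔
      (⟪x₁ - x₂, q₁ - q₂⟫ ≥ μ * ‖x₁ - x₂‖ ^ 2 ∧
       ⟪x₁ - x₂, q₁ - q₂⟫ ≥ β * ‖q₁ - q₂‖ ^ 2) := by
  constructor
  · rintro ⟨Q, hM, hC, h1, h2⟩
    constructor
    · have := hM x₁ x₂
      rw [h1, h2] at this
      rwa [real_inner_comm]
    · have := hC x₁ x₂
      rw [h1, h2] at this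
      rw [real_inner_comm]
      exact this
  · rintro ⟨hA, hB⟩
    by_cases hx : x₁ = x₂
    · -- degenerate case: x₁ = x₂ forces q₁ = q₂
      have hq : q₁ = q₂ := by
        have h0 : ⟪x₁ - x₂, q₁ - q₂⟫ = 0 := by rw [hx]; simp
        rw [h0] at hB
        have hle : ‖q₁ - q₂‖ ^ 2 ≤ 0 := by nlinarith
        have hqq : ‖q₁ - q₂‖ = 0 := by nlinarith [sq_nonneg ‖q₁ - q₂‖, norm_nonneg (q₁ - q₂)]
        exact sub_eq_zero.mp (norm_eq_zero.mp hqq)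
      refine ⟨fun a => q₁ + μ • (a - x₁), ?_, ?_, by simp, by rw [← hx, hq]; simp⟩
      · intro a b
        have key : (q₁ + μ • (a - x₁)) - (q₁ + μ • (b - x₁)) = μ • (a - b) := by module
        rw [key, real_inner_smul_left, real_inner_self_eq_norm_sq]
      · intro a b
        have key : (q₁ + μ • (a - x₁)) - (q₁ + μ • (b - x₁)) = μ • (a - b) := by module
        rw [key, real_inner_smul_left, real_inner_self_eq_norm_sq, norm_smul]
        simp only [Real.norm_eq_abs, abs_of_pos hμ, mul_pow]
        nlinarith [sq_nonneg ‖a - b‖, mul_nonneg hμ.le (sq_nonneg ‖a - b‖)]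
    · -- main case
      set u : H := x₁ - x₂ with hu
      set w : H := q₁ - q₂ with hw
      have hu0 : u ≠ 0 := sub_ne_zero.mpr hx
      set c : ℝ := ⟪u, w⟫ with hc
      set n : ℝ := ‖u‖ ^ 2 with hn
      have hn0 : 0 < n := hn ▸ pow_pos (norm_pos_iff.mpr hu0) 2
      set z : H := w - (c / n) • u with hz
      have hu2 : ⟪u, u⟫ = n := real_inner_self_eq_norm_sq u
      have hwu : ⟪w, u⟫ = c := by rw [hc]; exact (real_inner_comm w u).symm
      have huz : ⟪u, z⟫ = 0 := by
        rw [hz]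
        simp only [inner_sub_right, real_inner_smul_right, hu2, ← hc]
        field_simp
        ring
      have hzu : ⟪z, u⟫ = 0 := by rw [real_inner_comm]; exact huz
      have hzn2 : n * ‖z‖ ^ 2 = ‖w‖ ^ 2 * n - c ^ 2 := by
        have hzz : ⟪z, z⟫ = ‖z‖ ^ 2 := real_inner_self_eq_norm_sq z
        have hww : ⟪w, w⟫ = ‖w‖ ^ 2 := real_inner_self_eq_norm_sq w
        have expand : ⟪z, z⟫ = ⟪w, w⟫ - 2 * (c / n) * c + (c / n) ^ 2 * n := by
          rw [hz]
          simp only [inner_sub_left, inner_sub_right, real_inner_smul_left,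
            real_inner_smul_right, hu2, hwu, ← hc]
          ring
        rw [hzz, hww] at expand
        rw [expand]
        field_simp
        ring
      -- the interpolating map
      refine ⟨fun a => q₂ + (c / n) • (a - x₂) + (⟪u, a - x₂⟫ / n) • z - (⟪z, a - x₂⟫ / n) • u,
        ?_, ?_, ?pt1, ?pt2⟩
      case pt1 =>
        show q₂ + (c / n) • (x₁ - x₂) + (⟪u, x₁ - x₂⟫ / n) • z - (⟪z, x₁ - x₂⟫ / n) • u = q₁
        rw [← hu, hu2, hzu, div_self hn0.ne', zero_div, hz, hw]
        module
      case pt2 => simp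
      all_goals {
        intro a b
        have key : (q₂ + (c / n) • (a - x₂) + (⟪u, a - x₂⟫ / n) • z - (⟪z, a - x₂⟫ / n) • u)
            - (q₂ + (c / n) • (b - x₂) + (⟪u, b - x₂⟫ / n) • z - (⟪z, b - x₂⟫ / n) • u)
            = (c / n) • (a - b) + (⟪u, a - b⟫ / n) • z - (⟪z, a - b⟫ / n) • u := by
          simp only [inner_sub_right]
          module
        set v : H := a - b with hv
        have hvv : ⟪v, v⟫ = ‖v‖ ^ 2 := real_inner_self_eq_norm_sq v
        have hinner : ⟪((c / n) • v + (⟪u, v⟫ / n) • z - (⟪z, v⟫ / n) • u), v⟫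
            = (c / n) * ‖v‖ ^ 2 := by
          simp only [inner_add_left, inner_sub_left, real_inner_smul_left, hvv,
            real_inner_comm v z, real_inner_comm v u]
          ring
        rw [key, hinner]
        first
        | -- strong monotonicity goal
          ( have hμn : μ * n ≤ c := hA
            rw [ge_iff_le, ← sub_nonneg]
            have : c / n * ‖v‖ ^ 2 - μ * ‖v‖ ^ 2 = ((c - μ * n) * ‖v‖ ^ 2) / n := by
              field_simp
            rw [this]
            exact div_nonneg (mul_nonneg (by linarith) (sq_nonneg _)) hn0.le )
        | -- cocoercivity goal
          ( have hβw : β * ‖w‖ ^ 2 ≤ c := hB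
            have hnorm : ‖(c / n) • v + (⟪u, v⟫ / n) • z - (⟪z, v⟫ / n) • u‖ ^ 2
                = (c ^ 2 * ‖v‖ ^ 2 + (⟪u, v⟫ ^ 2 * ‖z‖ ^ 2 + ⟪z, v⟫ ^ 2 * n)) / n ^ 2 := by
              have hzz2 : ⟪z, z⟫ = ‖z‖ ^ 2 := real_inner_self_eq_norm_sq z
              rw [← real_inner_self_eq_norm_sq]
              simp only [inner_add_left, inner_add_right, inner_sub_left, inner_sub_right,
                real_inner_smul_left, real_inner_smul_right, hvv, hu2, hzz2, huz, hzu,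
                real_inner_comm u v, real_inner_comm z v]
              field_simp
              ring
            rw [hnorm]
            have hbes : ⟪u, v⟫ ^ 2 * ‖z‖ ^ 2 + ⟪z, v⟫ ^ 2 * n ≤ n * ‖z‖ ^ 2 * ‖v‖ ^ 2 := by
              have := bessel_two u z v huz
              rw [← hn] at this
              linarith [this]
            have hmain : β * (c ^ 2 * ‖v‖ ^ 2 + (⟪u, v⟫ ^ 2 * ‖z‖ ^ 2 + ⟪z, v⟫ ^ 2 * n))
                ≤ c * n * ‖v‖ ^ 2 := by
              have e1 : β * (⟪u, v⟫ ^ 2 * ‖z‖ ^ 2 + ⟪z, v⟫ ^ 2 * n)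
                  ≤ β * (n * ‖z‖ ^ 2 * ‖v‖ ^ 2) :=
                mul_le_mul_of_nonneg_left hbes hβ.le
              have e2 : β * ‖w‖ ^ 2 * (n * ‖v‖ ^ 2) ≤ c * (n * ‖v‖ ^ 2) :=
                mul_le_mul_of_nonneg_right hβw (mul_nonneg hn0.le (sq_nonneg _))
              calc β * (c ^ 2 * ‖v‖ ^ 2 + (⟪u, v⟫ ^ 2 * ‖z‖ ^ 2 + ⟪z, v⟫ ^ 2 * n))
                  = β * c ^ 2 * ‖v‖ ^ 2
                      + β * (⟪u, v⟫ ^ 2 * ‖z‖ ^ 2 + ⟪z, v⟫ ^ 2 * n) := by ring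
                _ ≤ β * c ^ 2 * ‖v‖ ^ 2 + β * (n * ‖z‖ ^ 2 * ‖v‖ ^ 2) := by linarith
                _ = β * ‖w‖ ^ 2 * (n * ‖v‖ ^ 2) := by
                    linear_combination β * ‖v‖ ^ 2 * hzn2
                _ ≤ c * (n * ‖v‖ ^ 2) := e2
                _ = c * n * ‖v‖ ^ 2 := by ring
            rw [ge_iff_le, ← sub_nonneg]
            have : c / n * ‖v‖ ^ 2
                - β * ((c ^ 2 * ‖v‖ ^ 2 + (⟪u, v⟫ ^ 2 * ‖z‖ ^ 2 + ⟪z, v⟫ ^ 2 * n)) / n ^ 2)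
                = (c * n * ‖v‖ ^ 2
                    - β * (c ^ 2 * ‖v‖ ^ 2 + (⟪u, v⟫ ^ 2 * ‖z‖ ^ 2 + ⟪z, v⟫ ^ 2 * n))) / n ^ 2 := by
              field_simp
            rw [this]
            exact div_nonneg (by linarith) (by positivity) )
      }
end

section
/- Let H be a real Hilbert space and let μ, L ∈ (0,∞) satisfy μ ≤ L. Let (x₁,q₁), (x₂,q₂) ∈ H × H. Then there exists a map Q : H → H that is μ-strongly monotone and L-Lipschitz with Q x₁ = q₁ and Q x₂ = q₂ if and only if ⟨x₁ − x₂, q₁ − q₂⟩ ≥ μ‖x₁ − x₂‖² and ‖q₁ − q₂‖² ≤ L²‖x₁ − x₂‖². -/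
open RealInnerProductSpace

/-- Two-point interpolation with `M_μ ∩ L_L`: `{(x₁,q₁),(x₂,q₂)}` is interpolable by a
`μ`-strongly monotone and `L`-Lipschitz map iff the two corresponding inequalities hold. -/
theorem two_point_interpolation_ML
    {H : Type*} [NormedAddCommGroup H] [InnerProductSpace ℝ H] [CompleteSpace H]
    {μ L : ℝ} (hμ : 0 < μ) (hL : 0 < L) (hμL : μ ≤ L)
    (x₁ q₁ x₂ q₂ : H) :
    (∃ Q : H → H,
        (∀ a b : H, ⟪Q a - Q b, a - b⟫ ≥ μ * ‖a - b‖ ^ 2) ∧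
        (∀ a b : H, ‖Q a - Q b‖ ≤ L * ‖a - b‖) ∧
        Q x₁ = q₁ ∧ Q x₂ = q₂) ↔
      (⟪x₁ - x₂, q₁ - q₂⟫ ≥ μ * ‖x₁ - x₂‖ ^ 2 ∧
       ‖q₁ - q₂‖ ^ 2 ≤ L ^ 2 * ‖x₁ - x₂‖ ^ 2) := by
  constructor
  · rintro ⟨Q, hmono, hlip, hQ1, hQ2⟩
    constructor
    · have h := hmono x₁ x₂
      rw [hQ1, hQ2] at h
      rwa [real_inner_comm]
    · have h := hlip x₁ x₂
      rw [hQ1, hQ2] at h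
      nlinarith [norm_nonneg (q₁ - q₂), norm_nonneg (x₁ - x₂)]
  · rintro ⟨h1, h2⟩
    by_cases hx : x₁ = x₂
    · -- degenerate case: x₁ = x₂ forces q₁ = q₂
      subst hx
      have hx2 : ‖x₁ - x₁‖ ^ 2 = 0 := by simp
      have hq : q₁ = q₂ := by
        have h0 : ‖q₁ - q₂‖ ^ 2 = 0 := le_antisymm (by nlinarith) (sq_nonneg _)
        have : ‖q₁ - q₂‖ = 0 := by
          exact pow_eq_zero_iff (two_ne_zero) |>.mp h0
        simpa [sub_eq_zero] using this
      subst hq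
      refine ⟨fun x => μ • x + (q₁ - μ • x₁), ?_, ?_, ?_, ?_⟩
      · intro a b
        have hd : (μ • a + (q₁ - μ • x₁)) - (μ • b + (q₁ - μ • x₁)) = μ • (a - b) := by
          module
        rw [hd, real_inner_smul_left, real_inner_self_eq_norm_sq]
      · intro a b
        have hd : (μ • a + (q₁ - μ • x₁)) - (μ • b + (q₁ - μ • x₁)) = μ • (a - b) := by
          module
        rw [hd, norm_smul, Real.norm_eq_abs, abs_of_pos hμ]
        exact mul_le_mul_of_nonneg_right hμL (norm_nonneg _)
      · module
      · module
    · -- main case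
      obtain ⟨d, hd_def⟩ : ∃ d : H, d = x₁ - x₂ := ⟨_, rfl⟩
      obtain ⟨e, he_def⟩ : ∃ e : H, e = q₁ - q₂ := ⟨_, rfl⟩
      rw [← hd_def, ← he_def] at h1 h2
      have hdne : d ≠ 0 := hd_def ▸ sub_ne_zero_of_ne hx
      have hdn0 : ‖d‖ ≠ 0 := norm_ne_zero_iff.mpr hdne
      have hd2 : (0:ℝ) < ‖d‖ ^ 2 := pow_pos (norm_pos_iff.mpr hdne) 2
      obtain ⟨α, hα_def⟩ : ∃ α : ℝ, α = ⟪d, e⟫ / ‖d‖ ^ 2 := ⟨_, rfl⟩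
      obtain ⟨w, hw_def⟩ : ∃ w : H, w = e - α • d := ⟨_, rfl⟩
      have hα : μ ≤ α := by
        rw [hα_def, le_div_iff₀ hd2]
        linarith [h1]
      have hde : ⟪d, e⟫ = α * ‖d‖ ^ 2 := by
        rw [hα_def]; field_simp
      have hdw : ⟪d, w⟫ = 0 := by
        rw [hw_def, inner_sub_right, real_inner_smul_right, real_inner_self_eq_norm_sq, hde]
        ring
      have hwd : ⟪w, d⟫ = 0 := by rw [← real_inner_comm]; exact hdw
      have he : e = α • d + w := by rw [hw_def]; module
      have hnorm : ‖e‖ ^ 2 = α ^ 2 * ‖d‖ ^ 2 + ‖w‖ ^ 2 := by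
        rw [← real_inner_self_eq_norm_sq, he]
        simp only [inner_add_left, inner_add_right, real_inner_smul_left,
          real_inner_smul_right, hdw, hwd]
        simp only [real_inner_self_eq_norm_sq]
        ring
      have hL2 : α ^ 2 * ‖d‖ ^ 2 + ‖w‖ ^ 2 ≤ L ^ 2 * ‖d‖ ^ 2 := by
        rw [← hnorm]; exact h2
      -- the linear part
      obtain ⟨f, hf_def⟩ : ∃ f : H → H,
          f = fun v => α • v + (‖d‖ ^ 2)⁻¹ • (⟪v, d⟫ • w - ⟪v, w⟫ • d) := ⟨_, rfl⟩
      have hf_sub : ∀ u v : H, f (u - v) = f u - f v := by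
        intro u v
        simp only [hf_def, inner_sub_left]
        module
      -- Bessel-type inequality
      have hbessel : ∀ v : H, ⟪v, d⟫ ^ 2 * ‖w‖ ^ 2 + ⟪v, w⟫ ^ 2 * ‖d‖ ^ 2
          ≤ ‖v‖ ^ 2 * ‖d‖ ^ 2 * ‖w‖ ^ 2 := by
        intro v
        by_cases hw0 : w = 0
        · simp [hw0]
        · have hwn0 : ‖w‖ ≠ 0 := norm_ne_zero_iff.mpr hw0
          have hw2 : (0:ℝ) < ‖w‖ ^ 2 := pow_pos (norm_pos_iff.mpr hw0) 2
          obtain ⟨u, hu_def⟩ : ∃ u : H,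
              u = v - (⟪v, d⟫ / ‖d‖ ^ 2) • d - (⟪v, w⟫ / ‖w‖ ^ 2) • w := ⟨_, rfl⟩
          have hu : (0:ℝ) ≤ ⟪u, u⟫ := real_inner_self_nonneg
          have hvd : ⟪d, v⟫ = ⟪v, d⟫ := real_inner_comm v d
          have hvw : ⟪w, v⟫ = ⟪v, w⟫ := real_inner_comm v w
          have hexp : ⟪u, u⟫ = ‖v‖ ^ 2 - ⟪v, d⟫ ^ 2 / ‖d‖ ^ 2 - ⟪v, w⟫ ^ 2 / ‖w‖ ^ 2 := by
            simp only [hu_def, inner_sub_left, inner_sub_right, real_inner_smul_left,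
              real_inner_smul_right, hdw, hwd, hvd, hvw]
            simp only [real_inner_self_eq_norm_sq]
            field_simp
            try ring
          rw [hexp] at hu
          have h3 : ⟪v, d⟫ ^ 2 / ‖d‖ ^ 2 + ⟪v, w⟫ ^ 2 / ‖w‖ ^ 2 ≤ ‖v‖ ^ 2 := by linarith
          have h3' := mul_le_mul_of_nonneg_right h3 (le_of_lt (mul_pos hd2 hw2))
          calc ⟪v, d⟫ ^ 2 * ‖w‖ ^ 2 + ⟪v, w⟫ ^ 2 * ‖d‖ ^ 2
              = (⟪v, d⟫ ^ 2 / ‖d‖ ^ 2 + ⟪v, w⟫ ^ 2 / ‖w‖ ^ 2) * (‖d‖ ^ 2 * ‖w‖ ^ 2) := by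
                field_simp
                try ring
            _ ≤ ‖v‖ ^ 2 * (‖d‖ ^ 2 * ‖w‖ ^ 2) := h3'
            _ = ‖v‖ ^ 2 * ‖d‖ ^ 2 * ‖w‖ ^ 2 := by ring
      -- monotonicity of f
      have hfmono : ∀ v : H, ⟪f v, v⟫ = α * ‖v‖ ^ 2 := by
        intro v
        have hdv : ⟪d, v⟫ = ⟪v, d⟫ := real_inner_comm v d
        have hwv : ⟪w, v⟫ = ⟪v, w⟫ := real_inner_comm v w
        simp only [hf_def, inner_add_left, inner_sub_left, real_inner_smul_left, hdv, hwv]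
        simp only [real_inner_self_eq_norm_sq]
        ring
      -- Lipschitz bound for f
      have hflip : ∀ v : H, ‖f v‖ ^ 2 ≤ L ^ 2 * ‖v‖ ^ 2 := by
        intro v
        have hdv : ⟪d, v⟫ = ⟪v, d⟫ := real_inner_comm v d
        have hwv : ⟪w, v⟫ = ⟪v, w⟫ := real_inner_comm v w
        have hexp : ‖f v‖ ^ 2 = α ^ 2 * ‖v‖ ^ 2 +
            (‖d‖ ^ 2)⁻¹ ^ 2 * (⟪v, d⟫ ^ 2 * ‖w‖ ^ 2 + ⟪v, w⟫ ^ 2 * ‖d‖ ^ 2) := by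
          rw [← real_inner_self_eq_norm_sq]
          simp only [hf_def, inner_add_left, inner_add_right, inner_sub_left,
            inner_sub_right, real_inner_smul_left, real_inner_smul_right,
            hdw, hwd, hdv, hwv]
          simp only [real_inner_self_eq_norm_sq]
          ring
        rw [hexp]
        have hb := hbessel v
        calc α ^ 2 * ‖v‖ ^ 2 + (‖d‖ ^ 2)⁻¹ ^ 2 * (⟪v, d⟫ ^ 2 * ‖w‖ ^ 2 + ⟪v, w⟫ ^ 2 * ‖d‖ ^ 2)
            ≤ α ^ 2 * ‖v‖ ^ 2 + (‖d‖ ^ 2)⁻¹ ^ 2 * (‖v‖ ^ 2 * ‖d‖ ^ 2 * ‖w‖ ^ 2) := by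
              have := mul_le_mul_of_nonneg_left hb (sq_nonneg (‖d‖ ^ 2)⁻¹)
              linarith
          _ = ‖v‖ ^ 2 * (‖d‖ ^ 2)⁻¹ * (α ^ 2 * ‖d‖ ^ 2 + ‖w‖ ^ 2) := by
              field_simp
          _ ≤ ‖v‖ ^ 2 * (‖d‖ ^ 2)⁻¹ * (L ^ 2 * ‖d‖ ^ 2) := by
              apply mul_le_mul_of_nonneg_left hL2
              positivity
          _ = L ^ 2 * ‖v‖ ^ 2 := by field_simp
      have hfd : f d = e := by
        simp only [hf_def]
        rw [hdw, zero_smul, sub_zero, real_inner_self_eq_norm_sq, smul_smul,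
          inv_mul_cancel₀ (ne_of_gt hd2), one_smul, ← he]
      -- the interpolating map
      refine ⟨fun x => q₂ + f (x - x₂), ?_, ?_, ?_, ?_⟩
      · intro a b
        have hq : (q₂ + f (a - x₂)) - (q₂ + f (b - x₂)) = f (a - b) := by
          rw [hf_sub a x₂, hf_sub b x₂, hf_sub a b]; abel
        rw [hq, hfmono]
        exact mul_le_mul_of_nonneg_right hα (sq_nonneg _)
      · intro a b
        have hq : (q₂ + f (a - x₂)) - (q₂ + f (b - x₂)) = f (a - b) := by
          rw [hf_sub a x₂, hf_sub b x₂, hf_sub a b]; abel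
        rw [hq]
        have h9 := hflip (a - b)
        have h10 : ‖f (a - b)‖ ^ 2 ≤ (L * ‖a - b‖) ^ 2 := by rw [mul_pow]; exact h9
        have h11 := Real.sqrt_le_sqrt h10
        rwa [Real.sqrt_sq (norm_nonneg _), Real.sqrt_sq (by positivity)] at h11
      · show q₂ + f (x₁ - x₂) = q₁
        rw [← hd_def, hfd, he_def]; abel
      · show q₂ + f (x₂ - x₂) = q₂
        have hf0 : f 0 = 0 := by simp [hf_def]
        rw [sub_self, hf0, add_zero]
end

section
/- Let H be a real Hilbert space and let L ∈ (0,∞). Let (x₁,q₁), (x₂,q₂) ∈ H × H. Then there exists a map Q : H → H that is monotone and L-Lipschitz with Q x₁ = q₁ and Q x₂ = q₂ if and only if ⟨x₁ − x₂, q₁ − q₂⟩ ≥ 0 and ‖q₁ − q₂‖² ≤ L²‖x₁ − x₂‖². -/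
open RealInnerProductSpace

set_option maxHeartbeats 1000000 in
/-- Two-point interpolation with `M ∩ L_L`: `{(x₁,q₁),(x₂,q₂)}` is interpolable by a
monotone and `L`-Lipschitz map iff the two corresponding inequalities hold. -/
theorem two_point_interpolation_ML2
    {H : Type*} [NormedAddCommGroup H] [InnerProductSpace ℝ H] [CompleteSpace H]
    {L : ℝ} (hL : 0 < L)
    (x₁ q₁ x₂ q₂ : H) :
    (∃ Q : H → H,
        (∀ a b : H, ⟪Q a - Q b, a - b⟫ ≥ 0) ∧
        (∀ a b : H, ‖Q a - Q b‖ ≤ L * ‖a - b‖) ∧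
        Q x₁ = q₁ ∧ Q x₂ = q₂) ↔
      (⟪x₁ - x₂, q₁ - q₂⟫ ≥ 0 ∧
       ‖q₁ - q₂‖ ^ 2 ≤ L ^ 2 * ‖x₁ - x₂‖ ^ 2) := by
  constructor
  · rintro ⟨Q, hmono, hlip, h1, h2⟩
    constructor
    · have := hmono x₁ x₂
      rw [h1, h2, real_inner_comm] at this
      exact this
    · have := hlip x₁ x₂
      rw [h1, h2] at this
      nlinarith [norm_nonneg (q₁ - q₂), norm_nonneg (x₁ - x₂)]
  · rintro ⟨hm, hl⟩
    by_cases hx : x₂ = x₁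
    · subst hx
      have hq : q₁ = q₂ := by
        have h0 : ‖q₁ - q₂‖ = 0 := by
          have := norm_nonneg (q₁ - q₂)
          simp only [sub_self, norm_zero] at hl
          nlinarith
        rw [norm_eq_zero, sub_eq_zero] at h0
        exact h0
      refine ⟨fun _ => q₁, ?_, ?_, rfl, hq⟩
      · intro a b; simp
      · intro a b
        simp only [sub_self, norm_zero]
        exact mul_nonneg hL.le (norm_nonneg _)
    · -- main case
      set u : H := x₂ - x₁ with hu_def
      set w : H := q₂ - q₁ with hw_def
      have hu0 : u ≠ 0 := sub_ne_zero.mpr hx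
      have hA : (0:ℝ) < ‖u‖ ^ 2 := pow_pos (norm_pos_iff.mpr hu0) 2
      set α : ℝ := ⟪u, w⟫ / ‖u‖ ^ 2 with hα_def
      set p : H := w - α • u with hp_def
      have huw : ⟪u, w⟫ ≥ 0 := by
        have : ⟪x₁ - x₂, q₁ - q₂⟫ = ⟪u, w⟫ := by
          rw [hu_def, hw_def, ← neg_sub x₂ x₁, ← neg_sub q₂ q₁, inner_neg_neg]
        rwa [this] at hm
      have hα0 : 0 ≤ α := div_nonneg huw (le_of_lt hA)
      have hup : ⟪u, p⟫ = 0 := by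
        rw [hp_def, inner_sub_right, real_inner_smul_right,
          real_inner_self_eq_norm_sq, hα_def]
        field_simp
        ring
      have hpu : ⟪p, u⟫ = 0 := by rw [real_inner_comm]; exact hup
      have huu : ⟪u, u⟫ = ‖u‖ ^ 2 := real_inner_self_eq_norm_sq u
      have hpp : ⟪p, p⟫ = ‖p‖ ^ 2 := real_inner_self_eq_norm_sq p
      have hwL : ‖w‖ ^ 2 ≤ L ^ 2 * ‖u‖ ^ 2 := by
        have h1 : ‖q₁ - q₂‖ = ‖w‖ := by rw [hw_def, norm_sub_rev]
        have h2 : ‖x₁ - x₂‖ = ‖u‖ := by rw [hu_def, norm_sub_rev]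
        rwa [h1, h2] at hl
      -- Pythagoras: ‖w‖² = α²‖u‖² + ‖p‖²
      have hpyth : ‖w‖ ^ 2 = α ^ 2 * ‖u‖ ^ 2 + ‖p‖ ^ 2 := by
        have hw_eq : w = α • u + p := by rw [hp_def]; abel
        calc ‖w‖ ^ 2 = ⟪w, w⟫ := (real_inner_self_eq_norm_sq w).symm
          _ = α ^ 2 * ‖u‖ ^ 2 + ‖p‖ ^ 2 := by
              rw [hw_eq]
              simp only [inner_add_left, inner_add_right, real_inner_smul_left,
                real_inner_smul_right, huu, hpp, hup, hpu]
              ring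
      -- the map
      set Q : H → H := fun x =>
        q₁ + α • (x - x₁) +
          (‖u‖ ^ 2)⁻¹ • (⟪u, x - x₁⟫ • p - ⟪p, x - x₁⟫ • u) with hQ_def
      have hdiff : ∀ a b : H, Q a - Q b =
          α • (a - b) + (‖u‖ ^ 2)⁻¹ • (⟪u, a - b⟫ • p - ⟪p, a - b⟫ • u) := by
        intro a b
        have e1 : ⟪u, a - x₁⟫ = ⟪u, a - b⟫ + ⟪u, b - x₁⟫ := by
          rw [← inner_add_right]; congr 1; abel
        have e2 : ⟪p, a - x₁⟫ = ⟪p, a - b⟫ + ⟪p, b - x₁⟫ := by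
          rw [← inner_add_right]; congr 1; abel
        simp only [hQ_def, e1, e2]
        module
      refine ⟨Q, ?_, ?_, ?_, ?_⟩
      · -- monotone
        intro a b
        set v : H := a - b with hv_def
        have hvv : ⟪v, v⟫ = ‖v‖ ^ 2 := real_inner_self_eq_norm_sq v
        rw [hdiff a b, ← hv_def]
        simp only [inner_add_left, real_inner_smul_left, inner_sub_left, hvv]
        nlinarith [mul_nonneg hα0 (sq_nonneg ‖v‖)]
      · -- Lipschitz
        intro a b
        set v : H := a - b with hv_def
        set s : ℝ := ⟪u, v⟫ with hs_def
        set t : ℝ := ⟪p, v⟫ with ht_def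
        have hvv : ⟪v, v⟫ = ‖v‖ ^ 2 := real_inner_self_eq_norm_sq v
        have hvu : ⟪v, u⟫ = s := by rw [real_inner_comm]
        have hvp : ⟪v, p⟫ = t := by rw [real_inner_comm]
        -- Bessel (product form)
        have hbessel : s ^ 2 * ‖p‖ ^ 2 + t ^ 2 * ‖u‖ ^ 2 ≤
            ‖v‖ ^ 2 * ‖u‖ ^ 2 * ‖p‖ ^ 2 := by
          by_cases hp0 : p = 0
          · have ht0 : t = 0 := by rw [ht_def, hp0, inner_zero_left]
            simp [hp0, ht0]
          · have hP : (0:ℝ) < ‖p‖ ^ 2 := pow_pos (norm_pos_iff.mpr hp0) 2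
            have key : (0:ℝ) ≤
                ⟪v - (s / ‖u‖ ^ 2) • u - (t / ‖p‖ ^ 2) • p,
                 v - (s / ‖u‖ ^ 2) • u - (t / ‖p‖ ^ 2) • p⟫ :=
              real_inner_self_nonneg
            simp only [inner_sub_left, inner_sub_right, real_inner_smul_left,
              real_inner_smul_right] at key
            rw [hvv, hvu, hvp, huu, hpp, hup, hpu, ← hs_def, ← ht_def] at key
            have hA' : ‖u‖ ^ 2 ≠ 0 := ne_of_gt hA
            have hP' : ‖p‖ ^ 2 ≠ 0 := ne_of_gt hP
            have key2 : 0 ≤ ‖v‖ ^ 2 - s ^ 2 / ‖u‖ ^ 2 - t ^ 2 / ‖p‖ ^ 2 := by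
              have e : ‖v‖ ^ 2 - s / ‖u‖ ^ 2 * s - t / ‖p‖ ^ 2 * t -
                    (s / ‖u‖ ^ 2 * s - s / ‖u‖ ^ 2 * (s / ‖u‖ ^ 2 * ‖u‖ ^ 2) -
                      s / ‖u‖ ^ 2 * (t / ‖p‖ ^ 2 * 0)) -
                  (t / ‖p‖ ^ 2 * t - t / ‖p‖ ^ 2 * (s / ‖u‖ ^ 2 * 0) -
                    t / ‖p‖ ^ 2 * (t / ‖p‖ ^ 2 * ‖p‖ ^ 2))
                  = ‖v‖ ^ 2 - s ^ 2 / ‖u‖ ^ 2 - t ^ 2 / ‖p‖ ^ 2 := by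
                field_simp; ring
              rw [e] at key; exact key
            have h3 : 0 ≤ (‖v‖ ^ 2 - s ^ 2 / ‖u‖ ^ 2 - t ^ 2 / ‖p‖ ^ 2)
                * (‖u‖ ^ 2 * ‖p‖ ^ 2) :=
              mul_nonneg key2 (mul_pos hA hP).le
            have e2 : (‖v‖ ^ 2 - s ^ 2 / ‖u‖ ^ 2 - t ^ 2 / ‖p‖ ^ 2)
                * (‖u‖ ^ 2 * ‖p‖ ^ 2)
                = ‖v‖ ^ 2 * ‖u‖ ^ 2 * ‖p‖ ^ 2 - (s ^ 2 * ‖p‖ ^ 2 + t ^ 2 * ‖u‖ ^ 2) := by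
              field_simp; ring
            linarith [e2 ▸ h3]
        have hnormsq : ‖Q a - Q b‖ ^ 2 =
            α ^ 2 * ‖v‖ ^ 2 +
              ((‖u‖ ^ 2)⁻¹) ^ 2 * (s ^ 2 * ‖p‖ ^ 2 + t ^ 2 * ‖u‖ ^ 2) := by
          rw [← real_inner_self_eq_norm_sq, hdiff a b, ← hv_def]
          simp only [inner_add_left, inner_add_right, inner_sub_left,
            inner_sub_right, real_inner_smul_left, real_inner_smul_right]
          rw [hvv, hvu, hvp, huu, hpp, hup, hpu, ← hs_def, ← ht_def]
          ring
        have hc : ((‖u‖ ^ 2)⁻¹) ^ 2 * (s ^ 2 * ‖p‖ ^ 2 + t ^ 2 * ‖u‖ ^ 2) ≤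
            (‖u‖ ^ 2)⁻¹ * ‖p‖ ^ 2 * ‖v‖ ^ 2 := by
          have h1 : ((‖u‖ ^ 2)⁻¹) ^ 2 * (s ^ 2 * ‖p‖ ^ 2 + t ^ 2 * ‖u‖ ^ 2)
                * (‖u‖ ^ 2 * ‖u‖ ^ 2)
              ≤ ((‖u‖ ^ 2)⁻¹ * ‖p‖ ^ 2 * ‖v‖ ^ 2) * (‖u‖ ^ 2 * ‖u‖ ^ 2) := by
            have hA' : ‖u‖ ^ 2 ≠ 0 := ne_of_gt hA
            calc ((‖u‖ ^ 2)⁻¹) ^ 2 * (s ^ 2 * ‖p‖ ^ 2 + t ^ 2 * ‖u‖ ^ 2)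
                  * (‖u‖ ^ 2 * ‖u‖ ^ 2)
                = ((‖u‖ ^ 2)⁻¹ * ‖u‖ ^ 2) ^ 2 * (s ^ 2 * ‖p‖ ^ 2 + t ^ 2 * ‖u‖ ^ 2) := by
                  ring
              _ = s ^ 2 * ‖p‖ ^ 2 + t ^ 2 * ‖u‖ ^ 2 := by
                  rw [inv_mul_cancel₀ hA', one_pow, one_mul]
              _ ≤ ‖v‖ ^ 2 * ‖u‖ ^ 2 * ‖p‖ ^ 2 := hbessel
              _ = ((‖u‖ ^ 2)⁻¹ * ‖u‖ ^ 2) * (‖v‖ ^ 2 * ‖u‖ ^ 2 * ‖p‖ ^ 2) := by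
                  rw [inv_mul_cancel₀ hA', one_mul]
              _ = ((‖u‖ ^ 2)⁻¹ * ‖p‖ ^ 2 * ‖v‖ ^ 2) * (‖u‖ ^ 2 * ‖u‖ ^ 2) := by
                  ring
          exact le_of_mul_le_mul_right h1 (by positivity)
        have hcoef : α ^ 2 + (‖u‖ ^ 2)⁻¹ * ‖p‖ ^ 2 ≤ L ^ 2 := by
          have hb : α ^ 2 * ‖u‖ ^ 2 + ‖p‖ ^ 2 ≤ L ^ 2 * ‖u‖ ^ 2 := by
            rw [← hpyth]; exact hwL
          have hA' : ‖u‖ ^ 2 ≠ 0 := ne_of_gt hA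
          have h2 : (α ^ 2 + (‖u‖ ^ 2)⁻¹ * ‖p‖ ^ 2) * ‖u‖ ^ 2 ≤ L ^ 2 * ‖u‖ ^ 2 := by
            calc (α ^ 2 + (‖u‖ ^ 2)⁻¹ * ‖p‖ ^ 2) * ‖u‖ ^ 2
                = α ^ 2 * ‖u‖ ^ 2 + ((‖u‖ ^ 2)⁻¹ * ‖u‖ ^ 2) * ‖p‖ ^ 2 := by ring
              _ = α ^ 2 * ‖u‖ ^ 2 + ‖p‖ ^ 2 := by
                  rw [inv_mul_cancel₀ hA', one_mul]
              _ ≤ L ^ 2 * ‖u‖ ^ 2 := hb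
          exact le_of_mul_le_mul_right h2 hA
        have hsq : ‖Q a - Q b‖ ^ 2 ≤ (L * ‖v‖) ^ 2 := by
          rw [hnormsq]
          nlinarith [sq_nonneg ‖v‖, hc, hcoef]
        have h1 : 0 ≤ L * ‖v‖ := by positivity
        nlinarith [norm_nonneg (Q a - Q b), hsq]
      · -- Q x₁ = q₁
        show q₁ + α • (x₁ - x₁) +
          (‖u‖ ^ 2)⁻¹ • (⟪u, x₁ - x₁⟫ • p - ⟪p, x₁ - x₁⟫ • u) = q₁
        simp
      · -- Q x₂ = q₂
        show q₁ + α • (x₂ - x₁) +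
          (‖u‖ ^ 2)⁻¹ • (⟪u, x₂ - x₁⟫ • p - ⟪p, x₂ - x₁⟫ • u) = q₂
        have hx2 : x₂ - x₁ = u := rfl
        rw [hx2, huu, hpu, zero_smul, sub_zero, smul_smul,
          inv_mul_cancel₀ (ne_of_gt hA), one_smul, hp_def, hw_def]
        abel
end

section
/- Let H be a real Hilbert space containing 3 orthonormal vectors (dim H ≥ 3) and let μ, β ∈ (0,∞). Define ρ₁(μ,β) by: ρ₁ = |1 − β/(β+1)| if β² + μβ + β − μ ≤ 0; ρ₁ = |1 − (1+μβ)/((μ+1)(β+1))| if μβ − μ − β ≥ 1; ρ₁ = |1 − μ/(μ+1)| if μ² + μβ + μ − β ≤ 0; and ρ₁ = (1/2)·(β+μ)/√(βμ(β+μ+1)) if none of these three conditions holds. Then: (i) for every M_μ-resolvent J_A : H → H and every C_β-resolvent J_B : H → H, the operator T z = z − J_B z + J_A(2·J_B z − z) satisfies ‖T z − T z'‖ ≤ ρ₁(μ,β)·‖z − z'‖ for all z, z' ∈ H; and (ii) there exist an M_μ-resolvent J_A, a C_β-resolvent J_B and z ≠ z' in H with ‖T z − T z'‖ ≥ ρ₁(μ,β)·‖z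 − z'‖. -/
set_option maxHeartbeats 1600000


open RealInnerProductSpace
open scoped Classical

/-- The tight contraction factor for unrelaxed (`θ = 1`) Douglas–Rachford splitting with
`A` maximal `μ`-strongly monotone and `B` `β`-cocoercive. -/
noncomputable def rhoDRS₁ (μ β : ℝ) : ℝ :=
  if β ^ 2 + μ * β + β - μ ≤ 0 then
    |1 - β / (β + 1)|
  else if μ * β - μ - β ≥ 1 then
    |1 - (1 + μ * β) / ((μ + 1) * (β + 1))|
  else if μ ^ 2 + μ * β + μ - β ≤ 0 then
    |1 - μ / (μ + 1)|
  else
    1 / 2 * ((β + μ) / Real.sqrt (β * μ * (β + μ + 1)))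

/-- `J` is the resolvent of a maximal `μ`-strongly monotone operator. -/
def IsMResolvent {H : Type*} [NormedAddCommGroup H] [InnerProductSpace ℝ H]
    (μ : ℝ) (J : H → H) : Prop :=
  ∀ x y : H, ⟪J x - J y, x - y⟫ ≥ (1 + μ) * ‖J x - J y‖ ^ 2

/-- `J` is the resolvent of a `β`-cocoercive operator. -/
def IsCResolvent {H : Type*} [NormedAddCommGroup H] [InnerProductSpace ℝ H]
    (β : ℝ) (J : H → H) : Prop :=
  ∀ x y : H, ⟪(x - J x) - (y - J y), J x - J y⟫ ≥ β * ‖(x - J x) - (y - J y)‖ ^ 2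

lemma gram_expand {H : Type*} [NormedAddCommGroup H] [InnerProductSpace ℝ H]
    (x y w : H) (c d e : ℝ) :
    ‖c • x + d • y + e • w‖ ^ 2 =
      c^2*‖x‖^2 + d^2*‖y‖^2 + e^2*‖w‖^2
        + 2*(c*d*⟪x,y⟫ + c*e*⟪x,w⟫ + d*e*⟪y,w⟫) := by
  have h : ∀ u : H, ‖u‖ ^ 2 = ⟪u,u⟫ := fun u => (real_inner_self_eq_norm_sq u).symm
  rw [h, h, h, h]
  simp only [inner_add_left, inner_add_right, real_inner_smul_left, real_inner_smul_right]
  rw [real_inner_comm y x, real_inner_comm w x, real_inner_comm w y]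
  ring

lemma gram2 {H : Type*} [NormedAddCommGroup H] [InnerProductSpace ℝ H]
    (x y : H) (c d : ℝ) :
    ‖c • x + d • y‖ ^ 2 = c^2*‖x‖^2 + d^2*‖y‖^2 + 2*(c*d*⟪x,y⟫) := by
  have h : ∀ u : H, ‖u‖ ^ 2 = ⟪u,u⟫ := fun u => (real_inner_self_eq_norm_sq u).symm
  rw [h, h, h]
  simp only [inner_add_left, inner_add_right, real_inner_smul_left, real_inner_smul_right]
  rw [real_inner_comm y x]
  ring


lemma rho_nonneg {μ β : ℝ} (hμ : 0 < μ) (hβ : 0 < β) : 0 ≤ rhoDRS₁ μ β := by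
  rw [rhoDRS₁]; split_ifs <;> positivity


lemma scalar_bound {μ β A P S p q r : ℝ} (hμ : 0 < μ) (hβ : 0 < β)
    (hC1 : β * P ≤ r) (hC2 : (1+μ) * A ≤ q - p)
    (hG : ∀ c d e : ℝ, 0 ≤ c^2*A + d^2*P + e^2*S + 2*(c*d*p + c*e*q + d*e*r)) :
    A + 2*p + P ≤ rhoDRS₁ μ β ^ 2 * (P + 2*r + S) := by
  have hA : 0 ≤ A := by have := hG 1 0 0; nlinarith
  rw [rhoDRS₁]
  split_ifs with h1 h2 h3
  · -- regime 1
    have hP : 0 ≤ P := by have := hG 0 1 0; nlinarith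
    have hb1 : β < 1 := by nlinarith
    have habs : (1:ℝ) - β/(β+1) = 1/(β+1) := by field_simp; ring
    rw [habs, abs_of_pos (by positivity : (0:ℝ) < 1/(β+1))]
    have hg1 := hG (1+2*μ+β) β (-1)
    have hg2 := hG 0 β (-1)
    have hD : 0 < (1+2*μ+β)*(1-β)*(β+1)^2 :=
      mul_pos (mul_pos (by linarith) (by linarith)) (by positivity)
    have hkey : (1+2*μ+β)*(1-β)*(β+1)^2 * ((1/(β+1))^2*(P+2*r+S) - (A+2*p+P)) =
        2*(1+2*μ+β)*(1-β)*(β+1)*(r - β*P) + 2*(1+2*μ+β)*(β+1)^2*((q-p) - (1+μ)*A)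
        + (β+1)^2*((1+2*μ+β)^2*A + β^2*P + (-1:ℝ)^2*S + 2*((1+2*μ+β)*β*p + (1+2*μ+β)*(-1)*q + β*(-1)*r))
        + 2*(μ-μ*β-β^2-β)*((0:ℝ)^2*A + β^2*P + (-1:ℝ)^2*S + 2*(0*β*p + 0*(-1)*q + β*(-1)*r)) := by
      field_simp
      ring
    have hR : 0 ≤ (1+2*μ+β)*(1-β)*(β+1)^2 * ((1/(β+1))^2*(P+2*r+S) - (A+2*p+P)) := by
      rw [hkey]
      have t1 : 0 ≤ 2*(1+2*μ+β)*(1-β)*(β+1)*(r - β*P) := by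
        apply mul_nonneg _ (by linarith)
        nlinarith
      have t2 : 0 ≤ 2*(1+2*μ+β)*(β+1)^2*((q-p) - (1+μ)*A) := by
        apply mul_nonneg (by positivity); linarith
      have t3 : 0 ≤ (β+1)^2*((1+2*μ+β)^2*A + β^2*P + (-1:ℝ)^2*S + 2*((1+2*μ+β)*β*p + (1+2*μ+β)*(-1)*q + β*(-1)*r)) :=
        mul_nonneg (by positivity) hg1
      have t4 : 0 ≤ 2*(μ-μ*β-β^2-β)*((0:ℝ)^2*A + β^2*P + (-1:ℝ)^2*S + 2*(0*β*p + 0*(-1)*q + β*(-1)*r)) :=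
        mul_nonneg (by linarith) hg2
      linarith
    have := (mul_nonneg_iff_of_pos_left hD).mp hR
    linarith
  · -- regime 2
    have hβ1 : 1 < β := by nlinarith
    have hμ1 : 1 ≤ μ := by nlinarith
    have habs : (1:ℝ) - (1+μ*β)/((μ+1)*(β+1)) = (μ+β)/((μ+1)*(β+1)) := by field_simp; ring
    rw [habs, abs_of_pos (by positivity : (0:ℝ) < (μ+β)/((μ+1)*(β+1)))]
    have hg1 := hG ((1+μ)*(2*μ+β+1)) (-(μ*β-2*μ-1)) (-(μ+β))
    have hg2 := hG 0 β (-1)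
    have hm : 0 ≤ μ*β-μ-β-1 := by linarith
    have hD : 0 < (1+μ)^2*(1+β)^2*(β-1)*(2*μ+β+1) := by
      apply mul_pos (mul_pos (mul_pos (by positivity) (by positivity)) (by linarith)) (by linarith)
    have hkey : (1+μ)^2*(1+β)^2*(β-1)*(2*μ+β+1) * (((μ+β)/((μ+1)*(β+1)))^2*(P+2*r+S) - (A+2*p+P)) =
        2*(μ+β)*(μ-1)*(1+β)*(β-1)*(2*μ+β+1)*(r - β*P)
        + 2*(μ+β)*(1+μ)*(1+β)^2*(2*μ+β+1)*((q-p) - (1+μ)*A)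
        + (1+β)^2*(((1+μ)*(2*μ+β+1))^2*A + (-(μ*β-2*μ-1))^2*P + (-(μ+β))^2*S
            + 2*(((1+μ)*(2*μ+β+1))*(-(μ*β-2*μ-1))*p + ((1+μ)*(2*μ+β+1))*(-(μ+β))*q + (-(μ*β-2*μ-1))*(-(μ+β))*r))
        + 2*(μ*β-μ-β-1)*(μ+β)^2*((0:ℝ)^2*A + β^2*P + (-1:ℝ)^2*S + 2*(0*β*p + 0*(-1)*q + β*(-1)*r)) := by
      field_simp
      ring
    have hR : 0 ≤ (1+μ)^2*(1+β)^2*(β-1)*(2*μ+β+1) * (((μ+β)/((μ+1)*(β+1)))^2*(P+2*r+S) - (A+2*p+P)) := by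
      rw [hkey]
      have hP : 0 ≤ P := by have := hG 0 1 0; nlinarith
      have t1 : 0 ≤ 2*(μ+β)*(μ-1)*(1+β)*(β-1)*(2*μ+β+1)*(r - β*P) := by
        apply mul_nonneg _ (by linarith)
        apply mul_nonneg _ (by linarith)
        apply mul_nonneg _ (by linarith)
        apply mul_nonneg _ (by linarith)
        apply mul_nonneg (by linarith) (by linarith)
      have t2 : 0 ≤ 2*(μ+β)*(1+μ)*(1+β)^2*(2*μ+β+1)*((q-p) - (1+μ)*A) := by
        apply mul_nonneg (by positivity); linarith
      have t3 : 0 ≤ (1+β)^2*(((1+μ)*(2*μ+β+1))^2*A + (-(μ*β-2*μ-1))^2*P + (-(μ+β))^2*S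
            + 2*(((1+μ)*(2*μ+β+1))*(-(μ*β-2*μ-1))*p + ((1+μ)*(2*μ+β+1))*(-(μ+β))*q + (-(μ*β-2*μ-1))*(-(μ+β))*r)) :=
        mul_nonneg (by positivity) hg1
      have t4 : 0 ≤ 2*(μ*β-μ-β-1)*(μ+β)^2*((0:ℝ)^2*A + β^2*P + (-1:ℝ)^2*S + 2*(0*β*p + 0*(-1)*q + β*(-1)*r)) :=
        mul_nonneg (mul_nonneg (by linarith) (by positivity)) hg2
      linarith
    have := (mul_nonneg_iff_of_pos_left hD).mp hR
    linarith
  · -- regime 3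
    have hμ1 : μ < 1 := by nlinarith
    have habs : (1:ℝ) - μ/(μ+1) = 1/(μ+1) := by field_simp; ring
    rw [habs, abs_of_pos (by positivity : (0:ℝ) < 1/(μ+1))]
    have hg1 := hG (1+μ) (-μ) (-1)
    have hP : 0 ≤ P := by have := hG 0 1 0; nlinarith
    have hD : 0 < ((1:ℝ)+μ)^2 := by positivity
    have hkey : (1+μ)^2 * ((1/(μ+1))^2*(P+2*r+S) - (A+2*p+P)) =
        2*(1-μ)*(r - β*P) + 2*(1+μ)*((q-p) - (1+μ)*A)
        + ((1+μ)^2*A + (-μ)^2*P + (-1:ℝ)^2*S + 2*((1+μ)*(-μ)*p + (1+μ)*(-1)*q + (-μ)*(-1)*r))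
        + 2*(β-μ*β-μ-μ^2)*P := by
      field_simp
      ring
    have hR : 0 ≤ (1+μ)^2 * ((1/(μ+1))^2*(P+2*r+S) - (A+2*p+P)) := by
      rw [hkey]
      have t1 : 0 ≤ 2*(1-μ)*(r - β*P) := by
        apply mul_nonneg (by linarith) (by linarith)
      have t2 : 0 ≤ 2*(1+μ)*((q-p) - (1+μ)*A) := by
        apply mul_nonneg (by linarith); linarith
      have t4 : 0 ≤ 2*(β-μ*β-μ-μ^2)*P := by
        apply mul_nonneg (by nlinarith) hP
      linarith
    have := (mul_nonneg_iff_of_pos_left hD).mp hR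
    linarith
  · -- regime 4
    have hk : (0:ℝ) < β*μ*(β+μ+1) := by positivity
    have hs : Real.sqrt (β*μ*(β+μ+1)) ^ 2 = β*μ*(β+μ+1) := Real.sq_sqrt (le_of_lt hk)
    have hspos : 0 < Real.sqrt (β*μ*(β+μ+1)) := Real.sqrt_pos.mpr hk
    have hρ2 : (1/2*((β+μ)/Real.sqrt (β*μ*(β+μ+1))))^2 = (β+μ)^2/(4*(β*μ*(β+μ+1))) := by
      rw [mul_pow, div_pow, div_pow, hs]; field_simp; ring
    rw [hρ2]
    have hg1 := hG (2*μ*(β+μ+1)) (-(β-μ)) (-(β+μ))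
    have hD : 0 < 4*(β*μ*(β+μ+1)) := by positivity
    have hkey : 4*(β*μ*(β+μ+1)) * ((β+μ)^2/(4*(β*μ*(β+μ+1)))*(P+2*r+S) - (A+2*p+P)) =
        4*μ*(β+μ)*(r - β*P) + 4*μ*(β+μ+1)*(β+μ)*((q-p) - (1+μ)*A)
        + ((2*μ*(β+μ+1))^2*A + (-(β-μ))^2*P + (-(β+μ))^2*S
            + 2*((2*μ*(β+μ+1))*(-(β-μ))*p + (2*μ*(β+μ+1))*(-(β+μ))*q + (-(β-μ))*(-(β+μ))*r)) := by
      field_simp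
      ring
    have hR : 0 ≤ 4*(β*μ*(β+μ+1)) * ((β+μ)^2/(4*(β*μ*(β+μ+1)))*(P+2*r+S) - (A+2*p+P)) := by
      rw [hkey]
      have t1 : 0 ≤ 4*μ*(β+μ)*(r - β*P) := by
        apply mul_nonneg (by positivity) (by linarith)
      have t2 : 0 ≤ 4*μ*(β+μ+1)*(β+μ)*((q-p) - (1+μ)*A) := by
        apply mul_nonneg (by positivity); linarith
      linarith [hg1]
    have := (mul_nonneg_iff_of_pos_left hD).mp hR
    linarith

section Aux
variable {H : Type*} [NormedAddCommGroup H] [InnerProductSpace ℝ H]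

lemma lower_aux {e0 e1 : H} (h0 : ‖e0‖ = 1) (h1 : ‖e1‖ = 1) (h01 : ⟪e0,e1⟫ = 0)
    {μ β p w r : ℝ} (hμ : 0 < μ) (hβ : 0 < β) (ρ : ℝ) (hρ : 0 ≤ ρ)
    (hp : (1+μ)*(p^2+w^2) ≤ p) (hr : (1+β)*(r^2+w^2) ≤ r)
    (hval : ρ ^ 2 ≤ (r + p*(1-2*r) + 2*w^2)^2 + (w*(2-2*r-2*p))^2) :
    ∃ (JA JB : H → H) (z z' : H),
      (∀ x y : H, ⟪JA x - JA y, x - y⟫ ≥ (1 + μ) * ‖JA x - JA y‖ ^ 2) ∧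
      (∀ x y : H, ⟪(x - JB x) - (y - JB y), JB x - JB y⟫ ≥ β * ‖(x - JB x) - (y - JB y)‖ ^ 2) ∧
      z ≠ z' ∧
      ‖(z - JB z + JA ((2 : ℝ) • JB z - z)) - (z' - JB z' + JA ((2 : ℝ) • JB z' - z'))‖ ≥
        ρ * ‖z - z'‖ := by
  have h10 : ⟪e1,e0⟫ = 0 := by rw [real_inner_comm]; exact h01
  have h00 : ⟪e0,e0⟫ = 1 := by rw [real_inner_self_eq_norm_sq, h0]; norm_num
  have h11 : ⟪e1,e1⟫ = 1 := by rw [real_inner_self_eq_norm_sq, h1]; norm_num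
  refine ⟨fun x => (p*⟪e0,x⟫ - w*⟪e1,x⟫) • e0 + (p*⟪e1,x⟫ + w*⟪e0,x⟫) • e1,
          fun x => x - ((r*⟪e0,x⟫ - w*⟪e1,x⟫) • e0 + (r*⟪e1,x⟫ + w*⟪e0,x⟫) • e1),
          e0, 0, ?_, ?_, ?_, ?_⟩
  · intro x y
    set u := ⟪e0,x⟫ - ⟪e0,y⟫ with hu
    set v := ⟪e1,x⟫ - ⟪e1,y⟫ with hv
    have hJ : ((p*⟪e0,x⟫ - w*⟪e1,x⟫) • e0 + (p*⟪e1,x⟫ + w*⟪e0,x⟫) • e1)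
        - ((p*⟪e0,y⟫ - w*⟪e1,y⟫) • e0 + (p*⟪e1,y⟫ + w*⟪e0,y⟫) • e1)
        = (p*u - w*v) • e0 + (p*v + w*u) • e1 := by
      rw [hu, hv]; module
    rw [hJ]
    have hinner : ⟪(p*u - w*v) • e0 + (p*v + w*u) • e1, x - y⟫ = (p*u - w*v)*u + (p*v + w*u)*v := by
      simp only [inner_add_left, real_inner_smul_left, inner_sub_right]
      rw [hu, hv]; ring
    have hnorm : ‖(p*u - w*v) • e0 + (p*v + w*u) • e1‖^2 = (p*u - w*v)^2 + (p*v + w*u)^2 := by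
      rw [gram2, h0, h1, h01]; ring
    rw [hinner, hnorm]
    have hmul := mul_le_mul_of_nonneg_right hp (by positivity : (0:ℝ) ≤ u^2 + v^2)
    nlinarith [hmul]
  · intro x y
    set u := ⟪e0,x⟫ - ⟪e0,y⟫ with hu
    set v := ⟪e1,x⟫ - ⟪e1,y⟫ with hv
    have hg : (x - (x - ((r*⟪e0,x⟫ - w*⟪e1,x⟫) • e0 + (r*⟪e1,x⟫ + w*⟪e0,x⟫) • e1)))
        - (y - (y - ((r*⟪e0,y⟫ - w*⟪e1,y⟫) • e0 + (r*⟪e1,y⟫ + w*⟪e0,y⟫) • e1)))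
        = (r*u - w*v) • e0 + (r*v + w*u) • e1 := by
      rw [hu, hv]; module
    rw [hg]
    have hJB : (x - ((r*⟪e0,x⟫ - w*⟪e1,x⟫) • e0 + (r*⟪e1,x⟫ + w*⟪e0,x⟫) • e1))
        - (y - ((r*⟪e0,y⟫ - w*⟪e1,y⟫) • e0 + (r*⟪e1,y⟫ + w*⟪e0,y⟫) • e1))
        = (x - y) - ((r*u - w*v) • e0 + (r*v + w*u) • e1) := by
      rw [hu, hv]; module
    rw [hJB]
    set g : H := (r*u - w*v) • e0 + (r*v + w*u) • e1 with hgdef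
    have hinner : ⟪g, (x - y) - g⟫ = ((r*u - w*v)*u + (r*v + w*u)*v) - ‖g‖^2 := by
      rw [inner_sub_right, real_inner_self_eq_norm_sq]
      congr 1
      rw [hgdef]
      simp only [inner_add_left, real_inner_smul_left, inner_sub_right]
      rw [hu, hv]; ring
    have hnorm : ‖g‖^2 = (r*u - w*v)^2 + (r*v + w*u)^2 := by
      rw [hgdef, gram2, h0, h1, h01]; ring
    rw [hinner, hnorm]
    have hmul := mul_le_mul_of_nonneg_right hr (by positivity : (0:ℝ) ≤ u^2 + v^2)
    nlinarith [hmul]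
  · intro h
    rw [h] at h0
    simp at h0
  · have hz : e0 - (0:H) = e0 := by simp
    have key : (e0 - (e0 - ((r*⟪e0,e0⟫ - w*⟪e1,e0⟫) • e0 + (r*⟪e1,e0⟫ + w*⟪e0,e0⟫) • e1))
        + ((p*⟪e0,((2 : ℝ) • (e0 - ((r*⟪e0,e0⟫ - w*⟪e1,e0⟫) • e0 + (r*⟪e1,e0⟫ + w*⟪e0,e0⟫) • e1)) - e0)⟫
            - w*⟪e1,((2 : ℝ) • (e0 - ((r*⟪e0,e0⟫ - w*⟪e1,e0⟫) • e0 + (r*⟪e1,e0⟫ + w*⟪e0,e0⟫) • e1)) - e0)⟫) • e0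
          + (p*⟪e1,((2 : ℝ) • (e0 - ((r*⟪e0,e0⟫ - w*⟪e1,e0⟫) • e0 + (r*⟪e1,e0⟫ + w*⟪e0,e0⟫) • e1)) - e0)⟫
            + w*⟪e0,((2 : ℝ) • (e0 - ((r*⟪e0,e0⟫ - w*⟪e1,e0⟫) • e0 + (r*⟪e1,e0⟫ + w*⟪e0,e0⟫) • e1)) - e0)⟫) • e1))
        - ((0:H) - ((0:H) - ((r*⟪e0,(0:H)⟫ - w*⟪e1,(0:H)⟫) • e0 + (r*⟪e1,(0:H)⟫ + w*⟪e0,(0:H)⟫) • e1))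
        + ((p*⟪e0,((2 : ℝ) • ((0:H) - ((r*⟪e0,(0:H)⟫ - w*⟪e1,(0:H)⟫) • e0 + (r*⟪e1,(0:H)⟫ + w*⟪e0,(0:H)⟫) • e1)) - (0:H))⟫
            - w*⟪e1,((2 : ℝ) • ((0:H) - ((r*⟪e0,(0:H)⟫ - w*⟪e1,(0:H)⟫) • e0 + (r*⟪e1,(0:H)⟫ + w*⟪e0,(0:H)⟫) • e1)) - (0:H))⟫) • e0
          + (p*⟪e1,((2 : ℝ) • ((0:H) - ((r*⟪e0,(0:H)⟫ - w*⟪e1,(0:H)⟫) • e0 + (r*⟪e1,(0:H)⟫ + w*⟪e0,(0:H)⟫) • e1)) - (0:H))⟫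
            + w*⟪e0,((2 : ℝ) • ((0:H) - ((r*⟪e0,(0:H)⟫ - w*⟪e1,(0:H)⟫) • e0 + (r*⟪e1,(0:H)⟫ + w*⟪e0,(0:H)⟫) • e1)) - (0:H))⟫) • e1))
        = (r + p*(1-2*r) + 2*w^2) • e0 + (w*(2-2*r-2*p)) • e1 := by
      simp only [inner_zero_right, mul_zero, zero_smul, add_zero, zero_add, sub_zero, zero_sub,
        smul_zero, neg_zero, inner_sub_right, inner_add_right, inner_smul_right, sub_self,
        h00, h01, h10, h11, mul_one]
      module
    beta_reduce
    rw [key, hz, h0, mul_one]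
    have hn : ‖(r + p*(1-2*r) + 2*w^2) • e0 + (w*(2-2*r-2*p)) • e1‖^2
        = (r + p*(1-2*r) + 2*w^2)^2 + (w*(2-2*r-2*p))^2 := by
      rw [gram2, h0, h1, h01]; ring
    apply le_of_pow_le_pow_left₀ two_ne_zero (norm_nonneg _)
    rw [hn]
    exact hval
end Aux

-- choose (p, w, r) per regime with feasibility and tightness
lemma choice (μ β : ℝ) (hμ : 0 < μ) (hβ : 0 < β) :
    ∃ p w r : ℝ, (1+μ)*(p^2+w^2) ≤ p ∧ (1+β)*(r^2+w^2) ≤ r ∧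
      rhoDRS₁ μ β ^ 2 ≤ (r + p*(1-2*r) + 2*w^2)^2 + (w*(2-2*r-2*p))^2 := by
  rw [rhoDRS₁]
  split_ifs with h1 h2 h3
  · -- regime 1 : p = 0, w = 0, r = 1/(β+1)
    refine ⟨0, 0, 1/(β+1), by norm_num, le_of_eq (by field_simp; ring), ?_⟩
    rw [show (1:ℝ) - β/(β+1) = 1/(β+1) by field_simp; ring, abs_of_pos (by positivity : (0:ℝ) < 1/(β+1))]
    apply le_of_eq; ring
  · -- regime 2 : p = 1/(1+μ), w = 0, r = 1/(β+1)
    refine ⟨1/(1+μ), 0, 1/(β+1), le_of_eq (by field_simp; ring), le_of_eq (by field_simp; ring), ?_⟩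
    rw [show (1:ℝ) - (1+μ*β)/((μ+1)*(β+1)) = (μ+β)/((μ+1)*(β+1)) by field_simp; ring,
      abs_of_pos (by positivity : (0:ℝ) < (μ+β)/((μ+1)*(β+1)))]
    apply le_of_eq
    field_simp
    ring
  · -- regime 3 : p = 1/(1+μ), w = 0, r = 0
    refine ⟨1/(1+μ), 0, 0, le_of_eq (by field_simp; ring), by norm_num, ?_⟩
    rw [show (1:ℝ) - μ/(μ+1) = 1/(μ+1) by field_simp; ring, abs_of_pos (by positivity : (0:ℝ) < 1/(μ+1))]
    apply le_of_eq; ring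
  · -- regime 4
    push_neg at h1 h2 h3
    have hE1 : 0 < β^2+μ*β+β-μ := h1
    have hE2 : 0 < μ^2+μ*β+μ-β := h3
    have hm : 0 < 1+μ+β-μ*β := by linarith
    set K := 4*(β*μ*(β+μ+1)) with hK
    have hKpos : 0 < K := by rw [hK]; positivity
    set p := (β^2+μ*β+β-μ)*(1+μ)/K with hpdef
    set r := (μ^2+μ*β+μ-β)*(1+β)/K with hrdef
    have hV : 0 ≤ p/(1+μ) - p^2 := by
      have hid : p/(1+μ) - p^2
          = ((β^2+μ*β+β-μ)*((1+μ+β-μ*β)*(μ^2+μ*β+μ-β)))/K^2 := by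
        rw [hpdef, hK]; field_simp; ring
      rw [hid]
      apply div_nonneg _ (by positivity)
      exact mul_nonneg (le_of_lt hE1) (mul_nonneg (le_of_lt hm) (le_of_lt hE2))
    refine ⟨p, -Real.sqrt (p/(1+μ) - p^2), r, ?_, ?_, ?_⟩
    · have hw2 : (-Real.sqrt (p/(1+μ) - p^2))^2 = p/(1+μ) - p^2 := by
        rw [neg_pow, Real.sq_sqrt hV]; ring
      rw [hw2]
      apply le_of_eq
      field_simp
      ring
    · have hw2 : (-Real.sqrt (p/(1+μ) - p^2))^2 = p/(1+μ) - p^2 := by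
        rw [neg_pow, Real.sq_sqrt hV]; ring
      have hpr : p/(1+μ) - p^2 = r/(1+β) - r^2 := by
        rw [hpdef, hrdef, hK]; field_simp; ring
      rw [hw2, hpr]
      apply le_of_eq
      field_simp
      ring
    · have hw2 : (-Real.sqrt (p/(1+μ) - p^2))^2 = p/(1+μ) - p^2 := by
        rw [neg_pow, Real.sq_sqrt hV]; ring
      have hk : (0:ℝ) < β*μ*(β+μ+1) := by positivity
      have hs : Real.sqrt (β*μ*(β+μ+1)) ^ 2 = β*μ*(β+μ+1) := Real.sq_sqrt (le_of_lt hk)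
      have hρ2 : (1/2*((β+μ)/Real.sqrt (β*μ*(β+μ+1))))^2 = (β+μ)^2/K := by
        rw [mul_pow, div_pow, div_pow, hs, hK]; field_simp; ring
      rw [hρ2]
      apply le_of_eq
      have hY : (-Real.sqrt (p/(1+μ) - p^2)*(2-2*r-2*p))^2
          = ((-Real.sqrt (p/(1+μ) - p^2))^2)*(2-2*r-2*p)^2 := by ring
      rw [hY, hw2]
      rw [hpdef, hrdef, hK]
      field_simp
      ring


/-- Tight contraction factor of unrelaxed DRS with `A ∈ M_μ`, `B ∈ C_β`:
upper bound for all instances, with a matching lower bound. -/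
theorem DRS_contraction_coco_strmonotone_unrelaxed
    {H : Type*} [NormedAddCommGroup H] [InnerProductSpace ℝ H] [CompleteSpace H]
    (hdim : ∃ e : Fin 3 → H, Orthonormal ℝ e)
    {μ β : ℝ} (hμ : 0 < μ) (hβ : 0 < β) :
    (∀ JA JB : H → H, IsMResolvent μ JA → IsCResolvent β JB →
      ∀ z z' : H,
        ‖(z - JB z + JA ((2 : ℝ) • JB z - z)) - (z' - JB z' + JA ((2 : ℝ) • JB z' - z'))‖ ≤
          rhoDRS₁ μ β * ‖z - z'‖) ∧
    (∃ (JA JB : H → H) (z z' : H), IsMResolvent μ JA ∧ IsCResolvent β JB ∧ z ≠ z' ∧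
      ‖(z - JB z + JA ((2 : ℝ) • JB z - z)) - (z' - JB z' + JA ((2 : ℝ) • JB z' - z'))‖ ≥
        rhoDRS₁ μ β * ‖z - z'‖) := by
  constructor
  · intro JA JB hJA hJB z z'
    set ψ := JB z - JB z' with hψ
    set φ := (z - JB z) - (z' - JB z') with hφ
    set a := JA ((2 : ℝ) • JB z - z) - JA ((2 : ℝ) • JB z' - z') with ha
    have hzz : z - z' = ψ + φ := by rw [hψ, hφ]; abel
    have hout : (z - JB z + JA ((2 : ℝ) • JB z - z)) - (z' - JB z' + JA ((2 : ℝ) • JB z' - z'))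
        = φ + a := by rw [hφ, ha]; abel
    have hx : ((2 : ℝ) • JB z - z) - ((2 : ℝ) • JB z' - z') = ψ - φ := by
      rw [hψ, hφ]; simp only [smul_sub, two_smul]; abel
    rw [hout, hzz]
    have key : ‖φ + a‖^2 ≤ rhoDRS₁ μ β ^2 * (‖φ‖^2 + 2*⟪φ,ψ⟫ + ‖ψ‖^2) := by
      have hC1 : β * ‖φ‖^2 ≤ ⟪φ, ψ⟫ := hJB z z'
      have hC2' := hJA ((2 : ℝ) • JB z - z) ((2 : ℝ) • JB z' - z')
      rw [hx] at hC2'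
      rw [inner_sub_right] at hC2'
      have hC2 : (1+μ) * ‖a‖^2 ≤ ⟪a, ψ⟫ - ⟪a, φ⟫ := hC2'
      have hGf : ∀ c d e : ℝ, 0 ≤ c^2*‖a‖^2 + d^2*‖φ‖^2 + e^2*‖ψ‖^2
          + 2*(c*d*⟪a,φ⟫ + c*e*⟪a,ψ⟫ + d*e*⟪φ,ψ⟫) := by
        intro c d e
        rw [← gram_expand]
        positivity
      have hmain := scalar_bound hμ hβ hC1 hC2 hGf
      have e1 : ‖φ + a‖^2 = ‖a‖^2 + 2*⟪a,φ⟫ + ‖φ‖^2 := by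
        rw [norm_add_sq_real, real_inner_comm]; ring
      rw [e1]
      linarith [hmain]
    have e2 : ‖ψ + φ‖^2 = ‖φ‖^2 + 2*⟪φ,ψ⟫ + ‖ψ‖^2 := by
      rw [norm_add_sq_real, real_inner_comm]; ring
    have h2 : ‖φ + a‖^2 ≤ (rhoDRS₁ μ β * ‖ψ + φ‖)^2 := by
      rw [mul_pow, e2]; exact key
    exact le_of_pow_le_pow_left₀ two_ne_zero
      (mul_nonneg (rho_nonneg hμ hβ) (norm_nonneg _)) h2
  · obtain ⟨e, he⟩ := hdim
    have h0 : ‖e 0‖ = 1 := he.1 0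
    have h1 : ‖e 1‖ = 1 := he.1 1
    have h01 : ⟪e 0, e 1⟫ = 0 := he.2 (by decide)
    obtain ⟨p, w, r, hp, hr, hval⟩ := choice μ β hμ hβ
    obtain ⟨JA, JB, z, z', hJA, hJB, hne, hineq⟩ :=
      lower_aux h0 h1 h01 hμ hβ (rhoDRS₁ μ β) (rho_nonneg hμ hβ) hp hr hval
    exact ⟨JA, JB, z, z', hJA, hJB, hne, hineq⟩
end
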